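/- arXiv:2109.04033 — 13 statements merged into one kernel-verified Lean document; each statement's English description precedes it below -/
import Mathlib

section
/- Let T : ℝ^S → ℝ^S be the affine Bellman operator T(x) = R + γ·P·x. Then T is a γ-contraction in the D-weighted norm: for all x, y ∈ ℝ^S, ‖T(x) − T(y)‖_D ≤ γ‖x − y‖_D. -/
open Matrix

/-- The `D`-weighted norm `‖x‖_D = √(xᵀ D x)` with `D = diag d`. -/
noncomputable def wNorm {S : Type*} [Fintype S] [DecidableEq S]
    (d : S → ℝ) (x : S → ℝ) : ℝ :=
  Real.sqrt (x ⬝ᵥ (Matrix.diagonal d *ᵥ x))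

lemma wNorm_eq {S : Type*} [Fintype S] [DecidableEq S] (d x : S → ℝ) :
    wNorm d x = Real.sqrt (∑ i, d i * x i ^ 2) := by
  unfold wNorm
  congr 1
  simp [dotProduct, mulVec_diagonal]
  exact Finset.sum_congr rfl fun i _ => by ring

lemma key {S : Type*} [Fintype S] [DecidableEq S]
    (P : Matrix S S ℝ)
    (hP0 : ∀ i j, 0 ≤ P i j) (hP1 : ∀ i, ∑ j, P i j = 1)
    (d : S → ℝ) (hd : ∀ s, 0 < d s)
    (hstat : ∀ s', ∑ s, d s * P s s' = d s')
    (z : S → ℝ) : wNorm d (P *ᵥ z) ≤ wNorm d z := by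
  rw [wNorm_eq, wNorm_eq]
  apply Real.sqrt_le_sqrt
  have step : ∀ i, ((P *ᵥ z) i) ^ 2 ≤ ∑ j, P i j * z j ^ 2 := by
    intro i
    have hCS := Finset.sum_mul_sq_le_sq_mul_sq Finset.univ
      (fun j => Real.sqrt (P i j)) (fun j => Real.sqrt (P i j) * z j)
    have h1 : ∀ j, Real.sqrt (P i j) * (Real.sqrt (P i j) * z j) = P i j * z j := by
      intro j
      rw [← mul_assoc, Real.mul_self_sqrt (hP0 i j)]
    have h2 : ∀ j, Real.sqrt (P i j) ^ 2 = P i j := fun j => Real.sq_sqrt (hP0 i j)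
    have h3 : ∀ j, (Real.sqrt (P i j) * z j) ^ 2 = P i j * z j ^ 2 := by
      intro j; rw [mul_pow, h2]
    simp only [h1, h3] at hCS
    calc ((P *ᵥ z) i) ^ 2 = (∑ j, P i j * z j) ^ 2 := by simp [mulVec, dotProduct]
      _ ≤ (∑ j, Real.sqrt (P i j) ^ 2) * ∑ j, P i j * z j ^ 2 := hCS
      _ = ∑ j, P i j * z j ^ 2 := by simp only [h2, hP1 i, one_mul]
  calc ∑ i, d i * ((P *ᵥ z) i) ^ 2
      ≤ ∑ i, d i * ∑ j, P i j * z j ^ 2 := by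
        apply Finset.sum_le_sum
        intro i _
        exact mul_le_mul_of_nonneg_left (step i) (hd i).le
    _ = ∑ j, (∑ i, d i * P i j) * z j ^ 2 := by
        simp_rw [Finset.mul_sum, Finset.sum_mul]
        rw [Finset.sum_comm]
        apply Finset.sum_congr rfl
        intro j _
        apply Finset.sum_congr rfl
        intro i _; ring
    _ = ∑ j, d j * z j ^ 2 := by
        apply Finset.sum_congr rfl
        intro j _; rw [hstat j]

/-- The affine Bellman operator `T x = R + γ • P x` is a `γ`-contraction in the
`D`-weighted norm, where `d` is a positive stationary distribution of the
row-stochastic matrix `P`. -/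
theorem stmt_0 {S : Type*} [Fintype S] [DecidableEq S] [Nonempty S]
    (P : Matrix S S ℝ)
    (hP0 : ∀ i j, 0 ≤ P i j) (hP1 : ∀ i, ∑ j, P i j = 1)
    (d : S → ℝ) (hd : ∀ s, 0 < d s)
    (hstat : ∀ s', ∑ s, d s * P s s' = d s')
    (γ : ℝ) (hγ0 : 0 < γ) (hγ1 : γ < 1) (R : S → ℝ)
    (T : (S → ℝ) → (S → ℝ)) (hT : ∀ x, T x = R + γ • (P *ᵥ x)) :
    ∀ x y : S → ℝ, wNorm d (T x - T y) ≤ γ * wNorm d (x - y) := by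
  intro x y
  have hTxy : T x - T y = γ • (P *ᵥ (x - y)) := by
    rw [hT x, hT y, mulVec_sub]
    ext i; simp; ring
  rw [hTxy]
  have hsmul : wNorm d (γ • (P *ᵥ (x - y))) = γ * wNorm d (P *ᵥ (x - y)) := by
    rw [wNorm_eq, wNorm_eq]
    have : ∑ i, d i * (γ • (P *ᵥ (x - y))) i ^ 2
        = γ ^ 2 * ∑ i, d i * (P *ᵥ (x - y)) i ^ 2 := by
      rw [Finset.mul_sum]; apply Finset.sum_congr rfl; intro i _; simp; ring
    rw [this, Real.sqrt_mul (sq_nonneg γ), Real.sqrt_sq hγ0.le]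
  rw [hsmul]
  exact mul_le_mul_of_nonneg_left (key P hP0 hP1 d hd hstat (x - y)) hγ0.le
end

section
/- The composite projected Bellman operator x ↦ Π(R + γ·P·x) is a γ-contraction in the D-weighted norm: for all x, y ∈ ℝ^S, ‖Π(R + γPx) − Π(R + γPy)‖_D ≤ γ‖x − y‖_D. -/
open Matrix

section aux
variable {S : Type*} [Fintype S] [DecidableEq S]

lemma quad_eq (d x : S → ℝ) :
    x ⬝ᵥ (Matrix.diagonal d *ᵥ x) = ∑ i, d i * x i ^ 2 := by
  simp [dotProduct, Matrix.mulVec_diagonal]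
  apply Finset.sum_congr rfl
  intro i _
  ring

lemma quad_nonneg (d : S → ℝ) (hd : ∀ s, 0 ≤ d s) (x : S → ℝ) :
    0 ≤ x ⬝ᵥ (Matrix.diagonal d *ᵥ x) := by
  rw [quad_eq]
  exact Finset.sum_nonneg fun i _ => mul_nonneg (hd i) (sq_nonneg _)

lemma mulVec_dotProduct' {T : Type*} [Fintype T] (A : Matrix S T ℝ) (v : T → ℝ) (w : S → ℝ) :
    (A *ᵥ v) ⬝ᵥ w = v ⬝ᵥ (Aᵀ *ᵥ w) := by
  rw [dotProduct_comm, Matrix.dotProduct_mulVec, ← Matrix.mulVec_transpose,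
    dotProduct_comm]

lemma quad_P_le (P : Matrix S S ℝ)
    (hP0 : ∀ i j, 0 ≤ P i j) (hP1 : ∀ i, ∑ j, P i j = 1)
    (d : S → ℝ) (hd : ∀ s, 0 < d s)
    (hstat : ∀ s', ∑ s, d s * P s s' = d s') (z : S → ℝ) :
    (P *ᵥ z) ⬝ᵥ (Matrix.diagonal d *ᵥ (P *ᵥ z)) ≤ z ⬝ᵥ (Matrix.diagonal d *ᵥ z) := by
  rw [quad_eq, quad_eq]
  have key : ∀ i, (P *ᵥ z) i ^ 2 ≤ ∑ j, P i j * z j ^ 2 := by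
    intro i
    have h := Finset.sum_mul_sq_le_sq_mul_sq Finset.univ
      (fun j => Real.sqrt (P i j)) (fun j => Real.sqrt (P i j) * z j)
    have h1 : ∀ j, Real.sqrt (P i j) * (Real.sqrt (P i j) * z j) = P i j * z j := by
      intro j
      rw [← mul_assoc, Real.mul_self_sqrt (hP0 i j)]
    have h2 : ∀ j, Real.sqrt (P i j) ^ 2 = P i j := fun j => Real.sq_sqrt (hP0 i j)
    have h3 : ∀ j, (Real.sqrt (P i j) * z j) ^ 2 = P i j * z j ^ 2 := by
      intro j; rw [mul_pow, h2]
    simp only [h1, h2, h3, hP1 i, one_mul] at h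
    simpa [Matrix.mulVec, dotProduct] using h
  calc ∑ i, d i * (P *ᵥ z) i ^ 2 ≤ ∑ i, d i * ∑ j, P i j * z j ^ 2 := by
        apply Finset.sum_le_sum
        intro i _
        exact mul_le_mul_of_nonneg_left (key i) (hd i).le
    _ = ∑ j, (∑ i, d i * P i j) * z j ^ 2 := by
        simp_rw [Finset.mul_sum, Finset.sum_mul]
        rw [Finset.sum_comm]
        apply Finset.sum_congr rfl; intro j _
        apply Finset.sum_congr rfl; intro i _; ring
    _ = ∑ j, d j * z j ^ 2 := by
        apply Finset.sum_congr rfl; intro j _; rw [hstat j]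

lemma quad_proj_le (q : ℕ)
    (d : S → ℝ) (hd : ∀ s, 0 < d s)
    (Φ : Matrix S (Fin q) ℝ) (hΦ : Φ.rank = q)
    (v : S → ℝ) :
    ((Φ * (Φᵀ * Matrix.diagonal d * Φ)⁻¹ * Φᵀ * Matrix.diagonal d) *ᵥ v) ⬝ᵥ
      (Matrix.diagonal d *ᵥ ((Φ * (Φᵀ * Matrix.diagonal d * Φ)⁻¹ * Φᵀ * Matrix.diagonal d) *ᵥ v))
    ≤ v ⬝ᵥ (Matrix.diagonal d *ᵥ v) := by
  set D := Matrix.diagonal d with hD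
  set M := Φᵀ * D * Φ with hM
  have hDT : Dᵀ = D := by rw [hD, Matrix.diagonal_transpose]
  -- Φ.mulVec has trivial kernel
  have hinj : ∀ w : Fin q → ℝ, Φ *ᵥ w = 0 → w = 0 := by
    have h1 : Module.finrank ℝ (LinearMap.range Φ.mulVecLin) +
        Module.finrank ℝ (LinearMap.ker Φ.mulVecLin) = q := by
      rw [LinearMap.finrank_range_add_finrank_ker]
      simp
    rw [Matrix.rank] at hΦ
    have hker : Module.finrank ℝ (LinearMap.ker Φ.mulVecLin) = 0 := by omega
    have hbot : LinearMap.ker Φ.mulVecLin = ⊥ := Submodule.finrank_eq_zero.mp hker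
    intro w hw
    have : w ∈ LinearMap.ker Φ.mulVecLin := by
      simpa [Matrix.mulVecLin_apply] using hw
    rw [hbot] at this
    simpa using this
  -- M is symmetric
  have hMsymm : Mᵀ = M := by
    rw [hM, Matrix.transpose_mul, Matrix.transpose_mul, Matrix.transpose_transpose, hDT,
      Matrix.mul_assoc]
  -- M is invertible
  have hMunit : IsUnit M := by
    rw [← Matrix.mulVec_injective_iff_isUnit]
    intro a b hab
    have hsub : M *ᵥ (a - b) = 0 := by rw [Matrix.mulVec_sub, hab, sub_self]
    have hq0 : (Φ *ᵥ (a - b)) ⬝ᵥ (D *ᵥ (Φ *ᵥ (a - b))) = 0 := by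
      have : M *ᵥ (a - b) = Φᵀ *ᵥ (D *ᵥ (Φ *ᵥ (a - b))) := by
        rw [hM, Matrix.mulVec_mulVec, Matrix.mulVec_mulVec]
      rw [mulVec_dotProduct', ← this, hsub, dotProduct_zero]
    have hzero : Φ *ᵥ (a - b) = 0 := by
      rw [quad_eq] at hq0
      have hall := (Finset.sum_eq_zero_iff_of_nonneg
        (fun i _ => mul_nonneg (hd i).le (sq_nonneg ((Φ *ᵥ (a - b)) i)))).mp hq0
      funext i
      have := hall i (Finset.mem_univ i)
      have h2 : (Φ *ᵥ (a - b)) i ^ 2 = 0 := by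
        rcases mul_eq_zero.mp this with h | h
        · exact absurd h (hd i).ne'
        · exact h
      simpa using pow_eq_zero_iff (n := 2) (by norm_num) |>.mp h2
    have := hinj _ hzero
    exact sub_eq_zero.mp this
  have hMdet : IsUnit M.det := (Matrix.isUnit_iff_isUnit_det M).mp hMunit
  have hMinv : M⁻¹ * M = 1 := Matrix.nonsing_inv_mul M hMdet
  have hMinvT : M⁻¹ᵀ = M⁻¹ := by rw [Matrix.transpose_nonsing_inv, hMsymm]
  set Pr := Φ * M⁻¹ * Φᵀ * D with hPr
  have hidem : Pr * Pr = Pr := by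
    rw [hPr]
    calc (Φ * M⁻¹ * Φᵀ * D) * (Φ * M⁻¹ * Φᵀ * D)
        = Φ * M⁻¹ * (Φᵀ * D * Φ) * (M⁻¹ * (Φᵀ * D)) := by
          simp only [Matrix.mul_assoc]
      _ = Φ * ((M⁻¹ * M) * (M⁻¹ * (Φᵀ * D))) := by
          rw [← hM]; simp only [Matrix.mul_assoc]
      _ = Φ * M⁻¹ * Φᵀ * D := by
          rw [hMinv]; simp only [Matrix.mul_assoc, Matrix.one_mul]
  have hadj : Prᵀ * D = D * Pr := by
    rw [hPr]
    simp only [Matrix.transpose_mul, Matrix.transpose_transpose, hDT, hMinvT, Matrix.mul_assoc]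
  set p := Pr *ᵥ v with hp
  set r := v - p with hr
  have hPr0 : Pr *ᵥ r = 0 := by
    rw [hr, Matrix.mulVec_sub, hp, Matrix.mulVec_mulVec, hidem, sub_self]
  have cross : p ⬝ᵥ (D *ᵥ r) = 0 := by
    rw [hp, mulVec_dotProduct', Matrix.mulVec_mulVec, hadj, ← Matrix.mulVec_mulVec, hPr0,
      Matrix.mulVec_zero, dotProduct_zero]
  have symmbil : r ⬝ᵥ (D *ᵥ p) = p ⬝ᵥ (D *ᵥ r) := by
    rw [hD]
    simp only [dotProduct, Matrix.mulVec_diagonal]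
    apply Finset.sum_congr rfl; intro i _; ring
  have hv : v = p + r := by rw [hr]; abel
  have expand : v ⬝ᵥ (D *ᵥ v) = p ⬝ᵥ (D *ᵥ p) + r ⬝ᵥ (D *ᵥ r) := by
    conv_lhs => rw [hv]
    rw [Matrix.mulVec_add, add_dotProduct, dotProduct_add, dotProduct_add,
      cross, symmbil, cross]
    ring
  have hrnn : 0 ≤ r ⬝ᵥ (D *ᵥ r) := by rw [hD]; exact quad_nonneg d (fun s => (hd s).le) r
  linarith

lemma quad_smul (d : S → ℝ) (c : ℝ) (z : S → ℝ) :
    (c • z) ⬝ᵥ (Matrix.diagonal d *ᵥ (c • z)) = c ^ 2 * (z ⬝ᵥ (Matrix.diagonal d *ᵥ z)) := by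
  rw [quad_eq, quad_eq, Finset.mul_sum]
  apply Finset.sum_congr rfl; intro i _
  simp [Pi.smul_apply]
  ring
end aux

/-- The projected Bellman operator `x ↦ Π (R + γ P x)` is a `γ`-contraction in the
`D`-weighted norm, where `Π = Φ (Φᵀ D Φ)⁻¹ Φᵀ D`. -/
theorem stmt_3 {S : Type*} [Fintype S] [DecidableEq S] [Nonempty S]
    (q : ℕ) (hq : 0 < q)
    (P : Matrix S S ℝ)
    (hP0 : ∀ i j, 0 ≤ P i j) (hP1 : ∀ i, ∑ j, P i j = 1)
    (d : S → ℝ) (hd : ∀ s, 0 < d s)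
    (hstat : ∀ s', ∑ s, d s * P s s' = d s')
    (γ : ℝ) (hγ0 : 0 < γ) (hγ1 : γ < 1) (R : S → ℝ)
    (Φ : Matrix S (Fin q) ℝ) (hΦ : Φ.rank = q)
    (Proj : Matrix S S ℝ)
    (hProj : Proj = Φ * (Φᵀ * Matrix.diagonal d * Φ)⁻¹ * Φᵀ * Matrix.diagonal d) :
    ∀ x y : S → ℝ,
      wNorm d (Proj *ᵥ (R + γ • (P *ᵥ x)) - Proj *ᵥ (R + γ • (P *ᵥ y)))
        ≤ γ * wNorm d (x - y) := by
  intro x y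
  set z := x - y with hz
  have hdiff : Proj *ᵥ (R + γ • (P *ᵥ x)) - Proj *ᵥ (R + γ • (P *ᵥ y))
      = γ • (Proj *ᵥ (P *ᵥ z)) := by
    rw [← Matrix.mulVec_sub, add_sub_add_left_eq_sub, ← smul_sub, ← Matrix.mulVec_sub, ← hz,
      Matrix.mulVec_smul]
  rw [hdiff]
  unfold wNorm
  rw [quad_smul]
  have hchain : (Proj *ᵥ (P *ᵥ z)) ⬝ᵥ (Matrix.diagonal d *ᵥ (Proj *ᵥ (P *ᵥ z)))
      ≤ z ⬝ᵥ (Matrix.diagonal d *ᵥ z) := by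
    calc (Proj *ᵥ (P *ᵥ z)) ⬝ᵥ (Matrix.diagonal d *ᵥ (Proj *ᵥ (P *ᵥ z)))
        ≤ (P *ᵥ z) ⬝ᵥ (Matrix.diagonal d *ᵥ (P *ᵥ z)) := by
          rw [hProj]; exact quad_proj_le q d hd Φ hΦ (P *ᵥ z)
      _ ≤ z ⬝ᵥ (Matrix.diagonal d *ᵥ z) := quad_P_le P hP0 hP1 d hd hstat z
  rw [Real.sqrt_mul (sq_nonneg γ), Real.sqrt_sq hγ0.le]
  exact mul_le_mul_of_nonneg_left (Real.sqrt_le_sqrt hchain) hγ0.le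
end

section
/- The q×q matrix Φᵀ D (γP − I) Φ is nonsingular, where I denotes the S×S identity matrix. -/
open Matrix

/-- The matrix `Φᵀ D (γP − I) Φ` is nonsingular, where `P` is row-stochastic,
`d` is a positive stationary distribution of `P`, `γ ∈ (0,1)`, and `Φ` has full
column rank. -/
theorem stmt_5 {S : Type*} [Fintype S] [DecidableEq S] [Nonempty S]
    (q : ℕ) (hq : 0 < q)
    (P : Matrix S S ℝ)
    (hP0 : ∀ i j, 0 ≤ P i j) (hP1 : ∀ i, ∑ j, P i j = 1)
    (d : S → ℝ) (hd : ∀ s, 0 < d s)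
    (hstat : ∀ s', ∑ s, d s * P s s' = d s')
    (γ : ℝ) (hγ0 : 0 < γ) (hγ1 : γ < 1)
    (Φ : Matrix S (Fin q) ℝ) (hΦ : Φ.rank = q) :
    IsUnit (Φᵀ * Matrix.diagonal d * (γ • P - 1) * Φ) := by
  -- Φ has trivial kernel
  have hinj : ∀ v : Fin q → ℝ, Φ *ᵥ v = 0 → v = 0 := by
    have hrn := LinearMap.finrank_range_add_finrank_ker (Matrix.mulVecLin Φ)
    rw [show Module.finrank ℝ (LinearMap.range Φ.mulVecLin) = Φ.rank from rfl, hΦ] at hrn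
    simp only [Module.finrank_pi, Fintype.card_fin] at hrn
    have hker : Module.finrank ℝ (LinearMap.ker Φ.mulVecLin) = 0 := by omega
    have hkerbot : LinearMap.ker Φ.mulVecLin = ⊥ := Submodule.finrank_eq_zero.mp hker
    intro v hv
    have : v ∈ LinearMap.ker Φ.mulVecLin := by
      simpa [Matrix.mulVecLin_apply] using hv
    simpa [hkerbot] using this
  set M := Φᵀ * Matrix.diagonal d * (γ • P - 1) * Φ with hM
  rw [Matrix.isUnit_iff_isUnit_det, isUnit_iff_ne_zero]
  intro hdet
  obtain ⟨v, hv, hMv⟩ := (Matrix.exists_mulVec_eq_zero_iff).mpr hdet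
  set y : S → ℝ := Φ *ᵥ v with hy
  have hy0 : y ≠ 0 := fun h => hv (hinj v h)
  -- quadratic form is zero
  have hquad : y ⬝ᵥ ((Matrix.diagonal d * (γ • P - 1)) *ᵥ y) = 0 := by
    have h1 : M *ᵥ v = Φᵀ *ᵥ ((Matrix.diagonal d * (γ • P - 1)) *ᵥ (Φ *ᵥ v)) := by
      rw [hM, Matrix.mul_assoc, Matrix.mul_assoc, ← Matrix.mul_assoc (Matrix.diagonal d)]
      simp [Matrix.mulVec_mulVec]
    have h2 : v ⬝ᵥ (M *ᵥ v) = 0 := by rw [hMv, dotProduct_zero]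
    rw [h1, Matrix.dotProduct_mulVec, Matrix.vecMul_transpose] at h2
    exact h2
  -- expand the quadratic form
  have hexp : y ⬝ᵥ ((Matrix.diagonal d * (γ • P - 1)) *ᵥ y)
      = γ * (∑ s, ∑ s', d s * P s s' * y s * y s') - ∑ s, d s * y s ^ 2 := by
    have hDv : ((Matrix.diagonal d * (γ • P - 1)) *ᵥ y)
        = fun s => d s * (γ * (∑ s', P s s' * y s') - y s) := by
      funext s
      rw [← Matrix.mulVec_mulVec, Matrix.mulVec_diagonal]
      simp [Matrix.sub_mulVec, Matrix.smul_mulVec,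
        Matrix.one_mulVec, Matrix.mulVec, dotProduct, sub_mul,
        Finset.sum_sub_distrib, Matrix.one_apply, ite_mul, Finset.mul_sum,
        mul_assoc]
    rw [hDv]
    simp only [dotProduct, mul_sub, Finset.mul_sum, Finset.sum_sub_distrib]
    congr 1
    · exact Finset.sum_congr rfl fun s _ => Finset.sum_congr rfl fun s' _ => by ring
    · exact Finset.sum_congr rfl fun s _ => by ring
  -- key inequality
  have hkey : (∑ s, ∑ s', d s * P s s' * y s * y s') ≤ ∑ s, d s * y s ^ 2 := by
    have step : ∀ s s', d s * P s s' * y s * y s'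
        ≤ d s * P s s' * ((y s ^ 2 + y s' ^ 2) / 2) := by
      intro s s'
      have h1 : 0 ≤ d s * P s s' := mul_nonneg (hd s).le (hP0 s s')
      nlinarith [sq_nonneg (y s - y s'), mul_nonneg h1 (sq_nonneg (y s - y s'))]
    calc (∑ s, ∑ s', d s * P s s' * y s * y s')
        ≤ ∑ s, ∑ s', d s * P s s' * ((y s ^ 2 + y s' ^ 2) / 2) :=
          Finset.sum_le_sum fun s _ => Finset.sum_le_sum fun s' _ => step s s'
      _ = (∑ s, ∑ s', d s * P s s' * y s ^ 2 / 2)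
          + (∑ s, ∑ s', d s * P s s' * y s' ^ 2 / 2) := by
          rw [← Finset.sum_add_distrib]
          refine Finset.sum_congr rfl fun s _ => ?_
          rw [← Finset.sum_add_distrib]
          exact Finset.sum_congr rfl fun s' _ => by ring
      _ = (∑ s, d s * y s ^ 2 / 2) + (∑ s', d s' * y s' ^ 2 / 2) := by
          congr 1
          · refine Finset.sum_congr rfl fun s _ => ?_
            rw [show (∑ s', d s * P s s' * y s ^ 2 / 2)
                = (∑ s', P s s') * (d s * y s ^ 2 / 2) by
              rw [Finset.sum_mul]; exact Finset.sum_congr rfl fun s' _ => by ring]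
            rw [hP1 s]; ring
          · rw [Finset.sum_comm]
            refine Finset.sum_congr rfl fun s' _ => ?_
            rw [show (∑ s, d s * P s s' * y s' ^ 2 / 2)
                = (∑ s, d s * P s s') * (y s' ^ 2 / 2) by
              rw [Finset.sum_mul]; exact Finset.sum_congr rfl fun s _ => by ring]
            rw [hstat s']; ring
      _ = ∑ s, d s * y s ^ 2 := by
          rw [← Finset.sum_add_distrib]
          exact Finset.sum_congr rfl fun s _ => by ring
  -- positivity of the norm
  have hN : 0 < ∑ s, d s * y s ^ 2 := by
    obtain ⟨s0, hs0⟩ := Function.ne_iff.mp hy0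
    refine Finset.sum_pos' (fun s _ => mul_nonneg (hd s).le (sq_nonneg _)) ⟨s0,
      Finset.mem_univ s0, mul_pos (hd s0) ?_⟩
    have : y s0 ≠ 0 := by simpa using hs0
    positivity
  -- contradiction
  rw [hexp] at hquad
  nlinarith [mul_le_mul_of_nonneg_left hkey hγ0.le]
end

section
/- The unique θ ∈ ℝ^q satisfying the projected Bellman fixed-point equation Φθ = Π(R + γ·P·Φθ) is given explicitly by θ* = −(Φᵀ D (γP − I) Φ)⁻¹ Φᵀ D R. -/
open Matrix


lemma aux_cs {S : Type*} [Fintype S] (p y : S → ℝ) (hp : ∀ i, 0 ≤ p i) (h1 : ∑ i, p i = 1) :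
    (∑ i, p i * y i)^2 ≤ ∑ i, p i * y i ^ 2 := by
  have := Finset.sum_sq_le_sum_mul_sum_of_sq_eq_mul Finset.univ
    (r := fun i => p i * y i) (f := fun i => p i) (g := fun i => p i * y i ^ 2)
    (fun i _ => hp i) (fun i _ => mul_nonneg (hp i) (sq_nonneg _)) (fun i _ => by ring)
  simpa [h1] using this

lemma aux_key {S : Type*} [Fintype S] (P : Matrix S S ℝ)
    (hP0 : ∀ i j, 0 ≤ P i j) (hP1 : ∀ i, ∑ j, P i j = 1)
    (d : S → ℝ) (hd : ∀ s, 0 < d s)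
    (hstat : ∀ s', ∑ s, d s * P s s' = d s') (y : S → ℝ) :
    ∑ s, d s * (y s * (P *ᵥ y) s) ≤ ∑ s, d s * y s ^ 2 := by
  have hz : ∀ s, ((P *ᵥ y) s)^2 ≤ ∑ s', P s s' * y s' ^ 2 := fun s =>
    aux_cs (fun s' => P s s') y (hP0 s) (hP1 s)
  have h2 : ∑ s, d s * ((P *ᵥ y) s)^2 ≤ ∑ s, d s * y s ^ 2 := by
    calc ∑ s, d s * ((P *ᵥ y) s)^2 ≤ ∑ s, d s * ∑ s', P s s' * y s' ^ 2 := by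
          exact Finset.sum_le_sum fun s _ => mul_le_mul_of_nonneg_left (hz s) (hd s).le
      _ = ∑ s', (∑ s, d s * P s s') * y s' ^ 2 := by
          simp_rw [Finset.mul_sum, Finset.sum_mul]
          rw [Finset.sum_comm]
          congr 1; ext s'; congr 1; ext s; ring
      _ = ∑ s, d s * y s ^ 2 := by simp [hstat]
  have h3 : ∀ s, d s * (y s * (P *ᵥ y) s) ≤ d s * y s ^2 / 2 + d s * ((P *ᵥ y) s)^2 / 2 := by
    intro s
    have := mul_le_mul_of_nonneg_left (two_mul_le_add_sq (y s) ((P *ᵥ y) s)) (hd s).le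
    nlinarith [hd s]
  calc ∑ s, d s * (y s * (P *ᵥ y) s)
      ≤ ∑ s, (d s * y s ^2 / 2 + d s * ((P *ᵥ y) s)^2 / 2) := Finset.sum_le_sum fun s _ => h3 s
    _ = (∑ s, d s * y s ^ 2) / 2 + (∑ s, d s * ((P *ᵥ y) s)^2) / 2 := by
        rw [Finset.sum_add_distrib, ← Finset.sum_div, ← Finset.sum_div]
    _ ≤ ∑ s, d s * y s ^ 2 := by linarith

lemma aux_inj {S : Type*} [Fintype S] {q : ℕ} (Φ : Matrix S (Fin q) ℝ) (hΦ : Φ.rank = q) :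
    Function.Injective Φ.mulVec := by
  have hker : LinearMap.ker Φ.mulVecLin = ⊥ := by
    have hrn := Φ.mulVecLin.finrank_range_add_finrank_ker
    rw [show Module.finrank ℝ (LinearMap.range Φ.mulVecLin) = Φ.rank from rfl, hΦ] at hrn
    have hd2 : Module.finrank ℝ (Fin q → ℝ) = q := by simp
    rw [hd2] at hrn
    exact Submodule.finrank_eq_zero.mp (by omega)
  have hinj : Function.Injective Φ.mulVecLin := LinearMap.ker_eq_bot.mp hker
  intro a b hab
  exact hinj (by simpa using hab)

/-- The unique `θ` satisfying the projected Bellman fixed-point equation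
`Φθ = Π (R + γ P Φ θ)` is `θ* = −(Φᵀ D (γP − I) Φ)⁻¹ Φᵀ D R`. -/
theorem stmt_6 {S : Type*} [Fintype S] [DecidableEq S] [Nonempty S]
    (q : ℕ) (hq : 0 < q)
    (P : Matrix S S ℝ)
    (hP0 : ∀ i j, 0 ≤ P i j) (hP1 : ∀ i, ∑ j, P i j = 1)
    (d : S → ℝ) (hd : ∀ s, 0 < d s)
    (hstat : ∀ s', ∑ s, d s * P s s' = d s')
    (γ : ℝ) (hγ0 : 0 < γ) (hγ1 : γ < 1) (R : S → ℝ)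
    (Φ : Matrix S (Fin q) ℝ) (hΦ : Φ.rank = q)
    (Proj : Matrix S S ℝ)
    (hProj : Proj = Φ * (Φᵀ * Matrix.diagonal d * Φ)⁻¹ * Φᵀ * Matrix.diagonal d) :
    ∀ θ : Fin q → ℝ,
      Φ *ᵥ θ = Proj *ᵥ (R + γ • (P *ᵥ (Φ *ᵥ θ))) ↔
      θ = -((Φᵀ * Matrix.diagonal d * (γ • P - 1) * Φ)⁻¹ *ᵥ
              ((Φᵀ * Matrix.diagonal d) *ᵥ R)) := by
  set D := Matrix.diagonal d with hD
  set M := Φᵀ * D * Φ with hM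
  set C := Φᵀ * D * P * Φ with hC
  set A := Φᵀ * D * (γ • P - 1) * Φ with hA
  have hinj := aux_inj Φ hΦ
  -- quadratic form rewriting
  have hquad : ∀ (B : Matrix S S ℝ) (θ : Fin q → ℝ),
      θ ⬝ᵥ ((Φᵀ * B * Φ) *ᵥ θ) = (Φ *ᵥ θ) ⬝ᵥ (B *ᵥ (Φ *ᵥ θ)) := by
    intro B θ
    rw [← Matrix.mulVec_mulVec, ← Matrix.mulVec_mulVec, Matrix.dotProduct_mulVec,
      Matrix.vecMul_transpose]
  have hddot : ∀ (y z : S → ℝ), y ⬝ᵥ (D *ᵥ z) = ∑ s, d s * (y s * z s) := by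
    intro y z
    simp [dotProduct, hD, Matrix.mulVec_diagonal]
    congr 1; ext s; ring
  -- positivity of M form
  have hMpos : ∀ θ : Fin q → ℝ, θ ≠ 0 → 0 < θ ⬝ᵥ (M *ᵥ θ) := by
    intro θ hθ
    have hy : Φ *ᵥ θ ≠ 0 := by
      intro h
      exact hθ (hinj (by simpa using h))
    obtain ⟨s0, hs0⟩ : ∃ s, (Φ *ᵥ θ) s ≠ 0 := by
      by_contra h; push_neg at h; exact hy (funext h)
    rw [hM, hquad, hddot]
    have : ∀ s, d s * ((Φ *ᵥ θ) s * (Φ *ᵥ θ) s) = d s * ((Φ *ᵥ θ) s)^2 := by intro s; ring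
    simp_rw [this]
    apply Finset.sum_pos' (fun s _ => mul_nonneg (hd s).le (sq_nonneg _))
    exact ⟨s0, Finset.mem_univ s0, mul_pos (hd s0) (by positivity)⟩
  -- negativity of A form
  have hAneg : ∀ θ : Fin q → ℝ, θ ≠ 0 → θ ⬝ᵥ (A *ᵥ θ) < 0 := by
    intro θ hθ
    have hsplit : A = γ • C - M := by
      rw [hA, hC, hM]
      rw [Matrix.mul_sub, Matrix.mul_one, Matrix.sub_mul, Matrix.mul_smul, Matrix.smul_mul]
    rw [hsplit, Matrix.sub_mulVec, dotProduct_sub, Matrix.smul_mulVec,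
      dotProduct_smul]
    have h1 : θ ⬝ᵥ (C *ᵥ θ) ≤ θ ⬝ᵥ (M *ᵥ θ) := by
      rw [hC, hM, show Φᵀ * D * P * Φ = Φᵀ * (D * P) * Φ from by rw [Matrix.mul_assoc Φᵀ D P],
        hquad, hquad]
      rw [show (D * P) *ᵥ (Φ *ᵥ θ) = D *ᵥ (P *ᵥ (Φ *ᵥ θ)) from (Matrix.mulVec_mulVec _ _ _).symm]
      rw [hddot, hddot]
      have := aux_key P hP0 hP1 d hd hstat (Φ *ᵥ θ)
      calc ∑ s, d s * ((Φ *ᵥ θ) s * (P *ᵥ (Φ *ᵥ θ)) s) ≤ ∑ s, d s * (Φ *ᵥ θ) s ^ 2 := this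
        _ = ∑ s, d s * ((Φ *ᵥ θ) s * (Φ *ᵥ θ) s) := by congr 1; ext s; ring
    have h2 := hMpos θ hθ
    have h3 : γ * (θ ⬝ᵥ (C *ᵥ θ)) ≤ γ * (θ ⬝ᵥ (M *ᵥ θ)) := mul_le_mul_of_nonneg_left h1 hγ0.le
    have h4 : γ * (θ ⬝ᵥ (M *ᵥ θ)) < 1 * (θ ⬝ᵥ (M *ᵥ θ)) := mul_lt_mul_of_pos_right hγ1 h2
    simp only [smul_eq_mul]
    linarith
  -- invertibility
  have hMdet : IsUnit M.det := by
    rw [← Matrix.isUnit_iff_isUnit_det, ← Matrix.mulVec_injective_iff_isUnit]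
    intro a b hab
    by_contra hne
    have h0 : M *ᵥ (a - b) = 0 := by rw [Matrix.mulVec_sub, hab, sub_self]
    have := hMpos (a - b) (sub_ne_zero.mpr hne)
    rw [h0] at this
    simp at this
  have hAdet : IsUnit A.det := by
    rw [← Matrix.isUnit_iff_isUnit_det, ← Matrix.mulVec_injective_iff_isUnit]
    intro a b hab
    by_contra hne
    have h0 : A *ᵥ (a - b) = 0 := by rw [Matrix.mulVec_sub, hab, sub_self]
    have := hAneg (a - b) (sub_ne_zero.mpr hne)
    rw [h0] at this
    simp at this
  intro θ
  set y := Φ *ᵥ θ with hy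
  set v := R + γ • (P *ᵥ y) with hv
  set b := (Φᵀ * D) *ᵥ R with hb
  -- step 1
  have cancel1 : ∀ u : Fin q → ℝ, M *ᵥ (M⁻¹ *ᵥ u) = u := fun u => by
    rw [Matrix.mulVec_mulVec, Matrix.mul_nonsing_inv _ hMdet, Matrix.one_mulVec]
  have cancel2 : ∀ u : Fin q → ℝ, M⁻¹ *ᵥ (M *ᵥ u) = u := fun u => by
    rw [Matrix.mulVec_mulVec, Matrix.nonsing_inv_mul _ hMdet, Matrix.one_mulVec]
  have step1 : (Φ *ᵥ θ = Proj *ᵥ v) ↔ M *ᵥ θ = (Φᵀ * D) *ᵥ v := by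
    have hassoc : Proj = Φ * (M⁻¹ * (Φᵀ * D)) := by
      rw [hProj, Matrix.mul_assoc, Matrix.mul_assoc]
    have hProj' : Proj *ᵥ v = Φ *ᵥ (M⁻¹ *ᵥ ((Φᵀ * D) *ᵥ v)) := by
      rw [hassoc, ← Matrix.mulVec_mulVec, ← Matrix.mulVec_mulVec]
    rw [hProj']
    constructor
    · intro h
      have hθw := hinj h
      rw [hθw, cancel1]
    · intro h
      rw [← h, cancel2]
  -- step 2 : RHS of step1 equals b + γ • (C *ᵥ θ)
  have hrhs : (Φᵀ * D) *ᵥ v = b + γ • (C *ᵥ θ) := by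
    rw [hv, Matrix.mulVec_add, Matrix.mulVec_smul, hb, hy, Matrix.mulVec_mulVec,
      Matrix.mulVec_mulVec, hC, Matrix.mul_assoc (Φᵀ * D) P Φ]
  -- step 3
  have hAθ : ∀ θ : Fin q → ℝ, A *ᵥ θ = γ • (C *ᵥ θ) - M *ᵥ θ := by
    intro θ'
    have hsplit : A = γ • C - M := by
      rw [hA, hC, hM]
      rw [Matrix.mul_sub, Matrix.mul_one, Matrix.sub_mul, Matrix.mul_smul, Matrix.smul_mul]
    rw [hsplit, Matrix.sub_mulVec, Matrix.smul_mulVec]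
  have step2 : (M *ᵥ θ = b + γ • (C *ᵥ θ)) ↔ A *ᵥ θ = -b := by
    rw [hAθ]
    constructor
    · intro h; rw [h]; abel
    · intro h
      have : M *ᵥ θ = γ • (C *ᵥ θ) - (γ • (C *ᵥ θ) - M *ᵥ θ) := by abel
      rw [this, h]; abel
  have step3 : (A *ᵥ θ = -b) ↔ θ = -(A⁻¹ *ᵥ b) := by
    constructor
    · intro h
      have : A⁻¹ *ᵥ (A *ᵥ θ) = A⁻¹ *ᵥ (-b) := by rw [h]
      rw [Matrix.mulVec_mulVec, Matrix.nonsing_inv_mul _ hAdet, Matrix.one_mulVec,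
        Matrix.mulVec_neg] at this
      exact this
    · intro h
      rw [h, Matrix.mulVec_neg, Matrix.mulVec_mulVec, Matrix.mul_nonsing_inv _ hAdet,
        Matrix.one_mulVec]
  rw [step1, hrhs, step2, step3]
end

section
/- For every θ ∈ ℝ^q, the projected Bellman equation Π(R + γ·P·Φθ) − Φθ = 0 holds if and only if the linear equation Φᵀ D (γP − I) Φ θ = −Φᵀ D R holds. -/
open Matrix

lemma mulVec_inj_of_rank' {S : Type*} [Fintype S] [DecidableEq S] {q : ℕ}
    (Φ : Matrix S (Fin q) ℝ) (hΦ : Φ.rank = q) :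
    Function.Injective Φ.mulVec := by
  have h := LinearMap.finrank_range_add_finrank_ker Φ.mulVecLin
  rw [Matrix.rank] at hΦ
  rw [hΦ] at h
  simp only [Module.finrank_fin_fun] at h
  have hker : Module.finrank ℝ (LinearMap.ker Φ.mulVecLin) = 0 := by omega
  have : LinearMap.ker Φ.mulVecLin = ⊥ := Submodule.finrank_eq_zero.mp hker
  exact LinearMap.ker_eq_bot.mp this

lemma gram_isUnit' {S : Type*} [Fintype S] [DecidableEq S] {q : ℕ}
    (d : S → ℝ) (hd : ∀ s, 0 < d s)
    (Φ : Matrix S (Fin q) ℝ) (hΦ : Φ.rank = q) :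
    IsUnit (Φᵀ * Matrix.diagonal d * Φ) := by
  rw [← Matrix.mulVec_injective_iff_isUnit]
  intro x y hxy
  have hΦinj := mulVec_inj_of_rank' Φ hΦ
  apply hΦinj
  -- reduce to the case x - y, show kernel trivial
  have hz : (Φᵀ * Matrix.diagonal d * Φ) *ᵥ (x - y) = 0 := by
    rw [Matrix.mulVec_sub, hxy, sub_self]
  have key : ∀ z : Fin q → ℝ, (Φᵀ * Matrix.diagonal d * Φ) *ᵥ z = 0 → Φ *ᵥ z = 0 := by
    intro z hzz
    have h0 : z ⬝ᵥ ((Φᵀ * Matrix.diagonal d * Φ) *ᵥ z) = 0 := by rw [hzz, dotProduct_zero]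
    rw [← Matrix.mulVec_mulVec, ← Matrix.mulVec_mulVec, Matrix.dotProduct_mulVec,
      Matrix.vecMul_transpose] at h0
    set w := Φ *ᵥ z with hw
    have hsum : (Φ *ᵥ z) ⬝ᵥ (Matrix.diagonal d *ᵥ (Φ *ᵥ z))
        = ∑ s, d s * (w s)^2 := by
      simp [dotProduct, Matrix.mulVec_diagonal, ← hw]
      congr 1; funext s; ring
    rw [hsum] at h0
    funext s
    have hnn : ∀ s ∈ Finset.univ, 0 ≤ d s * (w s)^2 := fun s _ =>
      mul_nonneg (hd s).le (sq_nonneg _)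
    have := (Finset.sum_eq_zero_iff_of_nonneg hnn).mp h0 s (Finset.mem_univ s)
    have hws : (w s)^2 = 0 := by
      rcases mul_eq_zero.mp this with h | h
      · exact absurd h (hd s).ne'
      · exact h
    simpa using pow_eq_zero_iff (n := 2) (by norm_num) |>.mp hws
  have := key _ hz
  rw [Matrix.mulVec_sub, sub_eq_zero] at this
  exact this

/-- For every `θ`, the projected Bellman equation `Π(R + γPΦθ) − Φθ = 0` holds iff
the linear equation `Φᵀ D (γP − I) Φ θ = −Φᵀ D R` holds. -/
theorem stmt_7 {S : Type*} [Fintype S] [DecidableEq S] [Nonempty S]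
    (q : ℕ) (hq : 0 < q)
    (P : Matrix S S ℝ) (γ : ℝ) (R : S → ℝ)
    (d : S → ℝ) (hd : ∀ s, 0 < d s)
    (Φ : Matrix S (Fin q) ℝ) (hΦ : Φ.rank = q)
    (Proj : Matrix S S ℝ)
    (hProj : Proj = Φ * (Φᵀ * Matrix.diagonal d * Φ)⁻¹ * Φᵀ * Matrix.diagonal d) :
    ∀ θ : Fin q → ℝ,
      Proj *ᵥ (R + γ • (P *ᵥ (Φ *ᵥ θ))) - Φ *ᵥ θ = 0 ↔
      (Φᵀ * Matrix.diagonal d * (γ • P - 1) * Φ) *ᵥ θ =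
        -((Φᵀ * Matrix.diagonal d) *ᵥ R) := by
  intro θ
  set D := Matrix.diagonal d with hD
  set M := Φᵀ * D * Φ with hM
  set A := Φᵀ * D with hA
  have hMu : IsUnit M := gram_isUnit' d hd Φ hΦ
  have hMdet : IsUnit M.det := (Matrix.isUnit_iff_isUnit_det M).mp hMu
  have hL : M⁻¹ * M = 1 := Matrix.nonsing_inv_mul M hMdet
  have hR : M * M⁻¹ = 1 := Matrix.mul_nonsing_inv M hMdet
  set v := R + γ • (P *ᵥ (Φ *ᵥ θ)) with hv
  -- algebraic identity relating the two sides
  have hmat : Φᵀ * D * (γ • P - 1) * Φ = γ • (A * P * Φ) - M := by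
    rw [hA, hM]
    rw [Matrix.mul_sub, Matrix.sub_mul, Matrix.mul_one, Matrix.mul_smul, Matrix.smul_mul]
  have hAv : A *ᵥ v = A *ᵥ R + γ • ((A * P * Φ) *ᵥ θ) := by
    rw [hv, Matrix.mulVec_add, Matrix.mulVec_smul, Matrix.mulVec_mulVec, Matrix.mulVec_mulVec]
  have hMθ : A *ᵥ (Φ *ᵥ θ) = M *ᵥ θ := by
    rw [Matrix.mulVec_mulVec, hM, hA]
  have equiv1 : ((Φᵀ * D * (γ • P - 1) * Φ) *ᵥ θ = -(A *ᵥ R)) ↔ A *ᵥ v = M *ᵥ θ := by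
    rw [hmat, Matrix.sub_mulVec, Matrix.smul_mulVec, hAv]
    constructor
    · intro h
      have : γ • ((A * P * Φ) *ᵥ θ) - M *ᵥ θ + A *ᵥ R = 0 := by rw [h]; abel
      have h2 : A *ᵥ R + γ • ((A * P * Φ) *ᵥ θ) - M *ᵥ θ = 0 := by
        rw [← this]; abel
      linear_combination (norm := abel) h2
    · intro h
      have h2 : A *ᵥ R + γ • ((A * P * Φ) *ᵥ θ) - M *ᵥ θ = 0 := by rw [h]; abel
      linear_combination (norm := abel) h2
  rw [equiv1]
  constructor
  · intro h
    have hproj : Proj *ᵥ v = Φ *ᵥ θ := by rwa [sub_eq_zero] at h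
    have hAP : A * Proj = A := by
      rw [hProj, hA]
      calc Φᵀ * D * (Φ * M⁻¹ * Φᵀ * D) = (Φᵀ * D * Φ) * M⁻¹ * Φᵀ * D := by
            simp only [Matrix.mul_assoc]
        _ = Φᵀ * D := by rw [← hM, hR]; simp [Matrix.mul_assoc]
    calc A *ᵥ v = (A * Proj) *ᵥ v := by rw [hAP]
      _ = A *ᵥ (Proj *ᵥ v) := by rw [← Matrix.mulVec_mulVec]
      _ = A *ᵥ (Φ *ᵥ θ) := by rw [hproj]
      _ = M *ᵥ θ := hMθ
  · intro h
    rw [sub_eq_zero]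
    have hProj' : Proj = Φ * M⁻¹ * A := by rw [hProj, hA, hM, Matrix.mul_assoc]
    calc Proj *ᵥ v = (Φ * M⁻¹) *ᵥ (A *ᵥ v) := by
          rw [hProj']; simp [← Matrix.mulVec_mulVec]
      _ = (Φ * M⁻¹) *ᵥ (M *ᵥ θ) := by rw [h]
      _ = (Φ * M⁻¹ * M) *ᵥ θ := by rw [Matrix.mulVec_mulVec]
      _ = Φ *ᵥ θ := by rw [Matrix.mul_assoc, hL, Matrix.mul_one]
end

section
/- Assume A := Φᵀ D (γP − I) Φ is nonsingular and set θ* := −A⁻¹ Φᵀ D R. Consider the regularized Lagrangian L(θ,λ) := λᵀ Φᵀ D (R + γPΦθ − Φθ) − (1/2) λᵀ Φᵀ D Φ λ. Then the pair (θ,λ) ∈ ℝ^q × ℝ^q satisfies the stationarity conditions ∇_θ L(θ,λ) = (γPΦ − Φ)ᵀ D Φ λ = 0 and ∇_λ L(θ,λ) = Φᵀ D (R + γPΦθ − Φθ − Φλ) = 0 if and only if θ = θ* and λ = 0; i.e., the saddle point of L exists and is unique, given by (θ*, 0). -/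
open Matrix

/-- For the regularized Lagrangian
`L(θ,λ) = λᵀ Φᵀ D (R + γPΦθ − Φθ) − (1/2) λᵀ Φᵀ D Φ λ`, the stationarity conditions
`∇_θ L = (γPΦ − Φ)ᵀ D Φ λ = 0` and `∇_λ L = Φᵀ D (R + γPΦθ − Φθ − Φλ) = 0` hold iff
`θ = θ* := −A⁻¹ Φᵀ D R` and `λ = 0`; i.e. the saddle point of `L` is unique, `(θ*, 0)`. -/
theorem stmt_9 {S : Type*} [Fintype S] [DecidableEq S] [Nonempty S]
    (q : ℕ) (hq : 0 < q)
    (P : Matrix S S ℝ) (γ : ℝ) (R : S → ℝ)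
    (d : S → ℝ) (hd : ∀ s, 0 < d s)
    (Φ : Matrix S (Fin q) ℝ) (hΦ : Φ.rank = q)
    (A : Matrix (Fin q) (Fin q) ℝ)
    (hA : A = Φᵀ * Matrix.diagonal d * (γ • P - 1) * Φ)
    (hAunit : IsUnit A)
    (θs : Fin q → ℝ)
    (hθs : θs = -(A⁻¹ *ᵥ ((Φᵀ * Matrix.diagonal d) *ᵥ R))) :
    ∀ θ lam : Fin q → ℝ,
      (((γ • (P * Φ) - Φ)ᵀ * Matrix.diagonal d * Φ) *ᵥ lam = 0 ∧
       (Φᵀ * Matrix.diagonal d) *ᵥ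
          (R + γ • (P *ᵥ (Φ *ᵥ θ)) - Φ *ᵥ θ - Φ *ᵥ lam) = 0) ↔
      (θ = θs ∧ lam = 0) := by
  intro θ lam
  have hdet : IsUnit A.det := (Matrix.isUnit_iff_isUnit_det A).mp hAunit
  have hdetT : IsUnit Aᵀ.det := by rwa [Matrix.det_transpose]
  -- first condition matrix is Aᵀ
  have hM1 : (γ • (P * Φ) - Φ)ᵀ * Matrix.diagonal d * Φ = Aᵀ := by
    rw [hA]
    simp [Matrix.transpose_mul, Matrix.sub_mul, Matrix.mul_sub, Matrix.mul_assoc,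
      Matrix.diagonal_transpose]
  -- second condition rewritten
  have key : ∀ θ lam : Fin q → ℝ,
      (Φᵀ * Matrix.diagonal d) *ᵥ
          (R + γ • (P *ᵥ (Φ *ᵥ θ)) - Φ *ᵥ θ - Φ *ᵥ lam)
        = (Φᵀ * Matrix.diagonal d) *ᵥ R + A *ᵥ θ
          - (Φᵀ * Matrix.diagonal d * Φ) *ᵥ lam := by
    intro θ lam
    have h1 : γ • (P *ᵥ (Φ *ᵥ θ)) - Φ *ᵥ θ = ((γ • P - 1) * Φ) *ᵥ θ := by
      rw [Matrix.sub_mul, Matrix.smul_mul, Matrix.one_mul, Matrix.sub_mulVec,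
        Matrix.smul_mulVec, Matrix.mulVec_mulVec]
    rw [hA, Matrix.mul_sub, Matrix.mul_one, Matrix.sub_mul]
    simp only [Matrix.mulVec_add, Matrix.mulVec_sub, Matrix.sub_mulVec,
      Matrix.mulVec_mulVec, Matrix.mulVec_smul, Matrix.smul_mulVec,
      Matrix.mul_smul, Matrix.smul_mul, Matrix.mul_assoc]
    abel
  constructor
  · rintro ⟨h1, h2⟩
    rw [hM1] at h1
    have hlam : lam = 0 := by
      have := congrArg (fun v => Aᵀ⁻¹ *ᵥ v) h1
      simpa [Matrix.mulVec_mulVec, Matrix.nonsing_inv_mul _ hdetT] using this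
    subst hlam
    rw [key] at h2
    simp only [Matrix.mulVec_zero, sub_zero] at h2
    have hθ : A *ᵥ θ = -((Φᵀ * Matrix.diagonal d) *ᵥ R) := by
      linear_combination (norm := module) h2
    have := congrArg (fun v => A⁻¹ *ᵥ v) hθ
    simp only [Matrix.mulVec_mulVec, Matrix.nonsing_inv_mul _ hdet, Matrix.one_mulVec,
      Matrix.mulVec_neg] at this
    refine ⟨?_, rfl⟩
    rw [this, hθs, Matrix.mulVec_mulVec]
  · rintro ⟨hθ, hlam⟩
    subst hlam
    refine ⟨by simp, ?_⟩
    rw [key, hθ, hθs, Matrix.mulVec_neg, Matrix.mulVec_mulVec,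
      Matrix.mul_nonsing_inv _ hdet, Matrix.one_mulVec]
    simp
end

section
/- Fix λ ∈ ℝ^q and consider the function θ ↦ L(θ,λ) := λᵀ Φᵀ D (R + γPΦθ − Φθ) − (1/2) λᵀ Φᵀ D Φ λ on ℝ^q. If Φᵀ (γP − I)ᵀ D Φ λ ≠ 0, then this function is unbounded below (its infimum over θ ∈ ℝ^q is −∞). If Φᵀ (γP − I)ᵀ D Φ λ = 0, then L(θ,λ) = λᵀ Φᵀ D R − (1/2) λᵀ Φᵀ D Φ λ for every θ ∈ ℝ^q. Consequently, the dual problem max_λ min_θ L(θ,λ) is: maximize λᵀ Φᵀ D R − (1/2) λᵀ Φᵀ D Φ λ subject to Φᵀ (γP − I)ᵀ D Φ λ = 0. -/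
open Matrix

/-- Fix `λ` and consider `θ ↦ L(θ,λ) = λᵀ Φᵀ D (R + γPΦθ − Φθ) − (1/2) λᵀ Φᵀ D Φ λ`.
If `Φᵀ (γP − I)ᵀ D Φ λ ≠ 0`, the function is unbounded below; if
`Φᵀ (γP − I)ᵀ D Φ λ = 0`, it is constantly `λᵀ Φᵀ D R − (1/2) λᵀ Φᵀ D Φ λ`.
Hence the dual problem is to maximize `λᵀ Φᵀ D R − (1/2) λᵀ Φᵀ D Φ λ` subject to
`Φᵀ (γP − I)ᵀ D Φ λ = 0`. -/
theorem stmt_10 {S : Type*} [Fintype S] [DecidableEq S] [Nonempty S]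
    (q : ℕ) (hq : 0 < q)
    (P : Matrix S S ℝ) (γ : ℝ) (R : S → ℝ)
    (d : S → ℝ) (hd : ∀ s, 0 < d s)
    (Φ : Matrix S (Fin q) ℝ) (hΦ : Φ.rank = q)
    (L : (Fin q → ℝ) → (Fin q → ℝ) → ℝ)
    (hL : ∀ θ lam, L θ lam =
      lam ⬝ᵥ ((Φᵀ * Matrix.diagonal d) *ᵥ (R + γ • (P *ᵥ (Φ *ᵥ θ)) - Φ *ᵥ θ)) -
      (1 / 2) * (lam ⬝ᵥ ((Φᵀ * Matrix.diagonal d * Φ) *ᵥ lam))) :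
    ∀ lam : Fin q → ℝ,
      ((Φᵀ * (γ • P - 1)ᵀ * Matrix.diagonal d * Φ) *ᵥ lam ≠ 0 →
        ∀ c : ℝ, ∃ θ : Fin q → ℝ, L θ lam < c) ∧
      ((Φᵀ * (γ • P - 1)ᵀ * Matrix.diagonal d * Φ) *ᵥ lam = 0 →
        ∀ θ : Fin q → ℝ,
          L θ lam = lam ⬝ᵥ ((Φᵀ * Matrix.diagonal d) *ᵥ R) -
            (1 / 2) * (lam ⬝ᵥ ((Φᵀ * Matrix.diagonal d * Φ) *ᵥ lam))) := by
  intro lam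
  set v : Fin q → ℝ := (Φᵀ * (γ • P - 1)ᵀ * Matrix.diagonal d * Φ) *ᵥ lam with hv
  set k : ℝ := lam ⬝ᵥ ((Φᵀ * Matrix.diagonal d) *ᵥ R) -
      (1 / 2) * (lam ⬝ᵥ ((Φᵀ * Matrix.diagonal d * Φ) *ᵥ lam)) with hk
  have key : ∀ θ : Fin q → ℝ, L θ lam = v ⬝ᵥ θ + k := by
    intro θ
    rw [hL]
    have h1 : R + γ • (P *ᵥ (Φ *ᵥ θ)) - Φ *ᵥ θ = R + (γ • P - 1) *ᵥ (Φ *ᵥ θ) := by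
      rw [Matrix.sub_mulVec, Matrix.smul_mulVec, Matrix.one_mulVec, add_sub_assoc]
    rw [h1, Matrix.mulVec_add, dotProduct_add, Matrix.mulVec_mulVec, Matrix.mulVec_mulVec]
    have h2 : lam ⬝ᵥ ((Φᵀ * Matrix.diagonal d * (γ • P - 1) * Φ) *ᵥ θ) = v ⬝ᵥ θ := by
      rw [Matrix.dotProduct_mulVec, hv]
      congr 1
      rw [← Matrix.mulVec_transpose]
      congr 1
      simp [Matrix.transpose_mul, Matrix.diagonal_transpose, Matrix.mul_assoc]
    rw [h2, hk]
    ring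
  refine ⟨fun hvne c => ?_, fun hv0 θ => by rw [key θ, hv0, zero_dotProduct, zero_add, hk]⟩
  have hvv : 0 < v ⬝ᵥ v := by
    have h0 : v ⬝ᵥ v ≠ 0 := fun h => hvne (dotProduct_self_eq_zero.mp h)
    have hnn : 0 ≤ v ⬝ᵥ v := Finset.sum_nonneg fun i _ => mul_self_nonneg (v i)
    exact lt_of_le_of_ne hnn (Ne.symm h0)
  refine ⟨((c - k - 1) / (v ⬝ᵥ v)) • v, ?_⟩
  rw [key, dotProduct_smul, smul_eq_mul, div_mul_cancel₀ _ (ne_of_gt hvv)]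
  linarith
end

section
/- For every θ ∈ ℝ^q, writing δ(θ) := Φᵀ D (R + γPΦθ − Φθ), the mean-square projected Bellman error satisfies the identity ‖Π(R + γPΦθ) − Φθ‖²_D = δ(θ)ᵀ (Φᵀ D Φ)⁻¹ δ(θ). -/
open Matrix

lemma aux_quad_eq {S : Type*} [Fintype S] [DecidableEq S]
    (d : S → ℝ) (y : S → ℝ) :
    y ⬝ᵥ (Matrix.diagonal d *ᵥ y) = ∑ i, d i * y i ^ 2 := by
  simp [dotProduct, Matrix.mulVec_diagonal]
  exact Finset.sum_congr rfl fun i _ => by ring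

lemma aux_quad_nonneg {S : Type*} [Fintype S] [DecidableEq S]
    (d : S → ℝ) (hd : ∀ s, 0 < d s) (y : S → ℝ) :
    0 ≤ y ⬝ᵥ (Matrix.diagonal d *ᵥ y) := by
  rw [aux_quad_eq]
  exact Finset.sum_nonneg fun i _ => mul_nonneg (hd i).le (sq_nonneg _)

lemma aux_isUnit_det {S : Type*} [Fintype S] [DecidableEq S]
    (q : ℕ) (d : S → ℝ) (hd : ∀ s, 0 < d s)
    (Φ : Matrix S (Fin q) ℝ) (hΦ : Φ.rank = q) :
    IsUnit (Φᵀ * Matrix.diagonal d * Φ).det := by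
  have hinj : Function.Injective Φ.mulVecLin := by
    rw [← LinearMap.ker_eq_bot]
    have h1 := LinearMap.finrank_range_add_finrank_ker Φ.mulVecLin
    rw [← Matrix.rank, hΦ] at h1
    simp only [Module.finrank_pi, Fintype.card_fin] at h1
    have h2 : Module.finrank ℝ (LinearMap.ker Φ.mulVecLin) = 0 := by omega
    exact Submodule.finrank_eq_zero.mp h2
  have hpd : (Φᵀ * Matrix.diagonal d * Φ).PosDef := by
    refine Matrix.PosDef.of_dotProduct_mulVec_pos ?_ ?_
    · simp [Matrix.IsHermitian, conjTranspose_mul, Matrix.mul_assoc]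
    · intro x hx
      have hΦx : Φ *ᵥ x ≠ 0 := by
        intro h; apply hx; apply hinj; simpa using h
      have heq : star x ⬝ᵥ (Φᵀ * Matrix.diagonal d * Φ) *ᵥ x
          = (Φ *ᵥ x) ⬝ᵥ (Matrix.diagonal d *ᵥ (Φ *ᵥ x)) := by
        simp [star, Matrix.mul_assoc, ← Matrix.mulVec_mulVec,
          Matrix.dotProduct_mulVec, Matrix.vecMul_transpose]
      rw [heq, aux_quad_eq]
      obtain ⟨s, hs⟩ : ∃ s, (Φ *ᵥ x) s ≠ 0 := by
        by_contra h; push_neg at h; exact hΦx (funext h)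
      apply Finset.sum_pos' (fun i _ => mul_nonneg (hd i).le (sq_nonneg _))
      exact ⟨s, Finset.mem_univ s, mul_pos (hd s) (by positivity)⟩
  exact hpd.det_pos.ne'.isUnit

/-- With `δ(θ) = Φᵀ D (R + γPΦθ − Φθ)`, the mean-square projected Bellman error
satisfies `‖Π(R + γPΦθ) − Φθ‖²_D = δ(θ)ᵀ (Φᵀ D Φ)⁻¹ δ(θ)`. -/
theorem stmt_11 {S : Type*} [Fintype S] [DecidableEq S] [Nonempty S]
    (q : ℕ) (hq : 0 < q)
    (P : Matrix S S ℝ) (γ : ℝ) (R : S → ℝ)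
    (d : S → ℝ) (hd : ∀ s, 0 < d s)
    (Φ : Matrix S (Fin q) ℝ) (hΦ : Φ.rank = q)
    (Proj : Matrix S S ℝ)
    (hProj : Proj = Φ * (Φᵀ * Matrix.diagonal d * Φ)⁻¹ * Φᵀ * Matrix.diagonal d)
    (δ : (Fin q → ℝ) → (Fin q → ℝ))
    (hδ : ∀ θ, δ θ =
      (Φᵀ * Matrix.diagonal d) *ᵥ (R + γ • (P *ᵥ (Φ *ᵥ θ)) - Φ *ᵥ θ)) :
    ∀ θ : Fin q → ℝ,
      wNorm d (Proj *ᵥ (R + γ • (P *ᵥ (Φ *ᵥ θ))) - Φ *ᵥ θ) ^ 2 =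
        δ θ ⬝ᵥ ((Φᵀ * Matrix.diagonal d * Φ)⁻¹ *ᵥ δ θ) := by
  intro θ
  set A := Φᵀ * Matrix.diagonal d * Φ with hA
  have hu : IsUnit A.det := aux_isUnit_det q d hd Φ hΦ
  have hinv : A⁻¹ * A = 1 := Matrix.nonsing_inv_mul A hu
  have hinv' : A * A⁻¹ = 1 := Matrix.mul_nonsing_inv A hu
  set v := R + γ • (P *ᵥ (Φ *ᵥ θ)) with hv
  set x := A⁻¹ *ᵥ δ θ with hx
  -- Step 1: the error vector equals Φ x
  have key : Proj *ᵥ v - Φ *ᵥ θ = Φ *ᵥ x := by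
    have h1 : Φ *ᵥ x = (Φ * A⁻¹ * (Φᵀ * Matrix.diagonal d)) *ᵥ (v - Φ *ᵥ θ) := by
      rw [hx, hδ θ, Matrix.mulVec_mulVec, Matrix.mulVec_mulVec, Matrix.mul_assoc]
    rw [h1, Matrix.mulVec_sub, Matrix.mulVec_mulVec]
    congr 1
    · rw [hProj, Matrix.mul_assoc (Φ * A⁻¹)]
    · rw [Matrix.mul_assoc (Φ * A⁻¹), ← hA, Matrix.mul_assoc Φ, hinv, Matrix.mul_one]
  rw [key]
  -- Step 2: compute the squared norm
  have hsq : wNorm d (Φ *ᵥ x) ^ 2 = (Φ *ᵥ x) ⬝ᵥ (Matrix.diagonal d *ᵥ (Φ *ᵥ x)) :=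
    Real.sq_sqrt (aux_quad_nonneg d hd _)
  rw [hsq]
  have h2 : (Φ *ᵥ x) ⬝ᵥ (Matrix.diagonal d *ᵥ (Φ *ᵥ x)) = x ⬝ᵥ (A *ᵥ x) := by
    rw [hA, ← Matrix.mulVec_mulVec, ← Matrix.mulVec_mulVec,
      Matrix.dotProduct_mulVec x Φᵀ, Matrix.vecMul_transpose]
  have h3 : A *ᵥ x = δ θ := by
    rw [hx, Matrix.mulVec_mulVec, hinv', Matrix.one_mulVec]
  rw [h2, h3, dotProduct_comm, hx]
end

section
/- For every θ ∈ ℝ^q, writing δ(θ) := Φᵀ D (R + γPΦθ − Φθ), the conjugate (Fenchel dual) representation of the mean-square projected Bellman error holds: (1/2)‖Π(R + γPΦθ) − Φθ‖²_D = sup over λ ∈ ℝ^q of [λᵀ δ(θ) − (1/2) λᵀ Φᵀ D Φ λ], and the supremum is attained uniquely at λ = (Φᵀ D Φ)⁻¹ δ(θ). -/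
open Matrix

/-- Fenchel-dual representation of the MSPBE: with `δ(θ) = Φᵀ D (R + γPΦθ − Φθ)`,
`(1/2)‖Π(R + γPΦθ) − Φθ‖²_D = sup_λ [λᵀ δ(θ) − (1/2) λᵀ Φᵀ D Φ λ]`, and the
supremum is attained uniquely at `λ = (Φᵀ D Φ)⁻¹ δ(θ)`. -/
theorem stmt_12 {S : Type*} [Fintype S] [DecidableEq S] [Nonempty S]
    (q : ℕ) (hq : 0 < q)
    (P : Matrix S S ℝ) (γ : ℝ) (R : S → ℝ)
    (d : S → ℝ) (hd : ∀ s, 0 < d s)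
    (Φ : Matrix S (Fin q) ℝ) (hΦ : Φ.rank = q)
    (Proj : Matrix S S ℝ)
    (hProj : Proj = Φ * (Φᵀ * Matrix.diagonal d * Φ)⁻¹ * Φᵀ * Matrix.diagonal d)
    (δ : (Fin q → ℝ) → (Fin q → ℝ))
    (hδ : ∀ θ, δ θ =
      (Φᵀ * Matrix.diagonal d) *ᵥ (R + γ • (P *ᵥ (Φ *ᵥ θ)) - Φ *ᵥ θ))
    (F : (Fin q → ℝ) → (Fin q → ℝ) → ℝ)
    (hF : ∀ θ lam, F θ lam =
      lam ⬝ᵥ δ θ - (1 / 2) * (lam ⬝ᵥ ((Φᵀ * Matrix.diagonal d * Φ) *ᵥ lam))) :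
    ∀ θ : Fin q → ℝ,
      (∀ lam : Fin q → ℝ, F θ lam ≤
        (1 / 2) * wNorm d (Proj *ᵥ (R + γ • (P *ᵥ (Φ *ᵥ θ))) - Φ *ᵥ θ) ^ 2) ∧
      F θ ((Φᵀ * Matrix.diagonal d * Φ)⁻¹ *ᵥ δ θ) =
        (1 / 2) * wNorm d (Proj *ᵥ (R + γ • (P *ᵥ (Φ *ᵥ θ))) - Φ *ᵥ θ) ^ 2 ∧
      (∀ lam : Fin q → ℝ,
        F θ lam = (1 / 2) * wNorm d (Proj *ᵥ (R + γ • (P *ᵥ (Φ *ᵥ θ))) - Φ *ᵥ θ) ^ 2 →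
        lam = (Φᵀ * Matrix.diagonal d * Φ)⁻¹ *ᵥ δ θ) := by
  intro θ
  set D : Matrix S S ℝ := Matrix.diagonal d with hD
  set M : Matrix (Fin q) (Fin q) ℝ := Φᵀ * D * Φ with hM
  have key : ∀ x y : Fin q → ℝ, x ⬝ᵥ (M *ᵥ y) = (Φ *ᵥ x) ⬝ᵥ (D *ᵥ (Φ *ᵥ y)) := by
    intro x y
    rw [hM, Matrix.mul_assoc, ← mulVec_mulVec, dotProduct_mulVec, vecMul_transpose,
      mulVec_mulVec]
  have hinj : Function.Injective Φ.mulVec := by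
    have h1 := LinearMap.finrank_range_add_finrank_ker Φ.mulVecLin
    rw [Matrix.rank] at hΦ
    rw [hΦ, Module.finrank_pi] at h1
    simp at h1
    exact LinearMap.ker_eq_bot.mp h1
  have hDform : ∀ z : S → ℝ, z ⬝ᵥ (D *ᵥ z) = ∑ s, d s * (z s) ^ 2 := by
    intro z
    simp only [hD, dotProduct, mulVec_diagonal]
    apply Finset.sum_congr rfl; intro s _; ring
  have hDnn : ∀ z : S → ℝ, 0 ≤ z ⬝ᵥ (D *ᵥ z) := by
    intro z; rw [hDform]
    exact Finset.sum_nonneg fun s _ => mul_nonneg (hd s).le (sq_nonneg _)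
  have hDpos : ∀ z : S → ℝ, z ≠ 0 → 0 < z ⬝ᵥ (D *ᵥ z) := by
    intro z hz; rw [hDform]
    obtain ⟨s, hs⟩ := Function.ne_iff.mp hz
    apply Finset.sum_pos' (fun s _ => mul_nonneg (hd s).le (sq_nonneg _))
    exact ⟨s, Finset.mem_univ s, mul_pos (hd s) (pow_two_pos_of_ne_zero hs)⟩
  have hMpos : ∀ x : Fin q → ℝ, x ≠ 0 → 0 < x ⬝ᵥ (M *ᵥ x) := by
    intro x hx
    rw [key]
    apply hDpos
    intro h
    apply hx
    apply hinj
    rw [h, Φ.mulVec_zero]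
  have hMnn : ∀ x : Fin q → ℝ, 0 ≤ x ⬝ᵥ (M *ᵥ x) := fun x => by rw [key]; exact hDnn _
  have hsym : ∀ x y : Fin q → ℝ, x ⬝ᵥ (M *ᵥ y) = y ⬝ᵥ (M *ᵥ x) := by
    intro x y
    rw [key, key, hD]
    simp only [dotProduct, mulVec_diagonal]
    apply Finset.sum_congr rfl; intro s _; ring
  have hMdet : IsUnit M.det := by
    by_contra h
    have h0 : Mᵀ.det = 0 := by
      rw [Matrix.det_transpose]
      by_contra h0
      exact h (isUnit_iff_ne_zero.mpr h0)
    obtain ⟨x, hx, hMx⟩ := Matrix.exists_mulVec_eq_zero_iff.mpr h0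
    have hx2 : x ᵥ* M = 0 := by rwa [← Matrix.mulVec_transpose]
    have : x ⬝ᵥ (M *ᵥ x) = 0 := by
      rw [dotProduct_mulVec, hx2, zero_dotProduct]
    exact absurd this (hMpos x hx).ne'
  have hMM : M * M⁻¹ = 1 := Matrix.mul_nonsing_inv M hMdet
  have hM'M : M⁻¹ * M = 1 := Matrix.nonsing_inv_mul M hMdet
  have hδθ := hδ θ
  have hFθ := hF θ
  set v : S → ℝ := R + γ • (P *ᵥ (Φ *ᵥ θ)) with hv
  set lamS : Fin q → ℝ := M⁻¹ *ᵥ δ θ with hlamS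
  have hMlam : M *ᵥ lamS = δ θ := by
    rw [hlamS, mulVec_mulVec, hMM, one_mulVec]
  have h1 : Proj *ᵥ v = Φ *ᵥ (M⁻¹ *ᵥ ((Φᵀ * D) *ᵥ v)) := by
    rw [hProj, mulVec_mulVec, mulVec_mulVec, Matrix.mul_assoc]
  have h2 : Φ *ᵥ (M⁻¹ *ᵥ ((Φᵀ * D) *ᵥ (Φ *ᵥ θ))) = Φ *ᵥ θ := by
    have e : (Φᵀ * D) *ᵥ (Φ *ᵥ θ) = M *ᵥ θ := by rw [mulVec_mulVec, ← hM]
    rw [e, mulVec_mulVec, mulVec_mulVec, Matrix.mul_assoc, hM'M, Matrix.mul_one]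
  have hx : Proj *ᵥ v - Φ *ᵥ θ = Φ *ᵥ lamS := by
    rw [h1, ← h2, ← mulVec_sub, ← mulVec_sub, ← Matrix.mulVec_sub, hlamS, hδθ]
  have hw : wNorm d (Proj *ᵥ v - Φ *ᵥ θ) ^ 2 = lamS ⬝ᵥ (M *ᵥ lamS) := by
    rw [hx, wNorm, Real.sq_sqrt (hDnn (Φ *ᵥ lamS)), key]
  have hFstar : F θ lamS = (1 / 2) * wNorm d (Proj *ᵥ v - Φ *ᵥ θ) ^ 2 := by
    rw [hFθ, ← hMlam, hw]; ring
  have expand : ∀ lam : Fin q → ℝ,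
      F θ lamS - F θ lam = (1 / 2) * ((lam - lamS) ⬝ᵥ (M *ᵥ (lam - lamS))) := by
    intro lam
    rw [hFθ, hFθ, ← hMlam]
    have e1 : (lam - lamS) ⬝ᵥ (M *ᵥ (lam - lamS)) =
        lam ⬝ᵥ (M *ᵥ lam) - lam ⬝ᵥ (M *ᵥ lamS) - lamS ⬝ᵥ (M *ᵥ lam)
          + lamS ⬝ᵥ (M *ᵥ lamS) := by
      rw [Matrix.mulVec_sub, dotProduct_sub, sub_dotProduct, sub_dotProduct]; ring
    rw [e1, hsym lamS lam]; ring
  refine ⟨fun lam => ?_, hFstar, fun lam hlam => ?_⟩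
  · have h := expand lam
    have := hMnn (lam - lamS)
    linarith [hFstar]
  · have h := expand lam
    rw [hlam, hFstar] at h
    have hz : (lam - lamS) ⬝ᵥ (M *ᵥ (lam - lamS)) = 0 := by linarith
    by_contra hne
    exact absurd hz (hMpos (lam - lamS) (sub_ne_zero.mpr hne)).ne'
end

section
/- Let A be an invertible q×q real matrix, B a symmetric positive definite q×q real matrix, and σ ≥ 0 a real number. Then the matrix A + σ · B (Aᵀ)⁻¹ B is invertible. -/
open Matrix

/-- If `A` is invertible, `B` is symmetric positive definite, and `σ ≥ 0`, then
`A + σ • B (Aᵀ)⁻¹ B` is invertible. -/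
theorem stmt_15 (q : ℕ) (hq : 0 < q)
    (A B : Matrix (Fin q) (Fin q) ℝ)
    (hA : IsUnit A) (hBsymm : Bᵀ = B)
    (hBpos : ∀ x : Fin q → ℝ, x ≠ 0 → 0 < x ⬝ᵥ (B *ᵥ x))
    (σ : ℝ) (hσ : 0 ≤ σ) :
    IsUnit (A + σ • (B * (Aᵀ)⁻¹ * B)) := by
  have hBherm : B.IsHermitian := by
    show Bᴴ = B
    rw [Matrix.conjTranspose_eq_transpose_of_trivial]
    exact hBsymm
  have hB : B.PosDef := Matrix.PosDef.of_dotProduct_mulVec_pos hBherm (fun x hx => by simpa using hBpos x hx)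
  have hAinj : Function.Injective (A.mulVec) :=
    Matrix.mulVec_injective_iff_isUnit.mpr hA
  have hC : (Aᵀ * B⁻¹ * A).PosDef := by
    refine Matrix.posDef_iff_dotProduct_mulVec.mpr ⟨?_, fun x hx => ?_⟩
    · have := Matrix.isHermitian_conjTranspose_mul_mul A hB.inv.isHermitian
      simpa [Matrix.conjTranspose_eq_transpose_of_trivial] using this
    · have hAx : A *ᵥ x ≠ 0 := by
        intro h
        exact hx (hAinj (by simpa using h))
      have h2 := hB.inv.dotProduct_mulVec_pos hAx
      have goal_eq : x ⬝ᵥ ((Aᵀ * B⁻¹ * A) *ᵥ x) = (A *ᵥ x) ⬝ᵥ (B⁻¹ *ᵥ (A *ᵥ x)) := by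
        rw [← Matrix.mulVec_mulVec, ← Matrix.mulVec_mulVec, Matrix.dotProduct_mulVec,
          Matrix.vecMul_transpose]
      simpa [goal_eq] using h2
  have hS : (σ • B).PosSemidef := by
    refine Matrix.posSemidef_iff_dotProduct_mulVec.mpr ⟨?_, fun x => ?_⟩
    · show (σ • B)ᴴ = σ • B
      simp [hBherm.eq, hBsymm]
    · have := (hB.posSemidef).dotProduct_mulVec_nonneg x
      simpa [Matrix.smul_mulVec, dotProduct_smul] using
        mul_nonneg hσ (by simpa using this)
  have hSum : (Aᵀ * B⁻¹ * A + σ • B).PosDef := hC.add_posSemidef hS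
  have hAt : IsUnit Aᵀ := by
    rw [Matrix.isUnit_iff_isUnit_det, Matrix.det_transpose,
      ← Matrix.isUnit_iff_isUnit_det]
    exact hA
  have hAti : IsUnit (Aᵀ)⁻¹ := Matrix.isUnit_nonsing_inv_iff.mpr hAt
  have h1 : (Aᵀ)⁻¹ * Aᵀ = 1 :=
    Matrix.nonsing_inv_mul _ (Matrix.isUnit_iff_isUnit_det _ |>.mp hAt)
  have h2 : B * B⁻¹ = 1 :=
    Matrix.mul_nonsing_inv _ (Matrix.isUnit_iff_isUnit_det _ |>.mp hB.isUnit)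
  have e1 : B * (Aᵀ)⁻¹ * (Aᵀ * B⁻¹ * A) = A := by
    calc B * (Aᵀ)⁻¹ * (Aᵀ * B⁻¹ * A)
        = B * ((Aᵀ)⁻¹ * Aᵀ) * (B⁻¹ * A) := by simp only [Matrix.mul_assoc]
      _ = A := by rw [h1]; simp only [Matrix.mul_one, ← Matrix.mul_assoc, h2, Matrix.one_mul]
  have key : A + σ • (B * (Aᵀ)⁻¹ * B) = B * (Aᵀ)⁻¹ * (Aᵀ * B⁻¹ * A + σ • B) := by
    rw [Matrix.mul_add, e1, Matrix.mul_smul]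
  rw [key]
  exact (hB.isUnit.mul hAti).mul hSum.isUnit
end

section
/- Assume A := Φᵀ D (γP − I) Φ is nonsingular, let B := Φᵀ D Φ, let σ ≥ 0, and set E := B (Aᵀ)⁻¹ B. Consider the Lagrangian L(θ,λ) := (σ/2) θᵀ B θ + λᵀ Φᵀ D (R + γPΦθ − Φθ) − (1/2) λᵀ B λ. Then the stationarity system ∇_θ L(θ,λ) = σ B θ + Aᵀ λ = 0 and ∇_λ L(θ,λ) = Φᵀ D R + A θ − B λ = 0 has a unique solution (θ,λ), and its θ-component equals θ̂_σ := −(A + σE)⁻¹ Φᵀ D R (in particular A + σE is invertible). -/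
open Matrix

section Aux

variable {S : Type*} [Fintype S] [DecidableEq S] {q : ℕ}

lemma phi_inj (Φ : Matrix S (Fin q) ℝ) (hΦ : Φ.rank = q) :
    Function.Injective Φ.mulVec := by
  have hker : LinearMap.ker Φ.mulVecLin = ⊥ := by
    have h1 := LinearMap.finrank_range_add_finrank_ker Φ.mulVecLin
    have h2 : Module.finrank ℝ (Fin q → ℝ) = q := by simp
    rw [h2] at h1
    have h3 : Φ.rank + Module.finrank ℝ (LinearMap.ker Φ.mulVecLin) = q := h1
    have : Module.finrank ℝ (LinearMap.ker Φ.mulVecLin) = 0 := by omega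
    exact Submodule.finrank_eq_zero.mp this
  rw [← Matrix.coe_mulVecLin]
  exact LinearMap.ker_eq_bot.mp hker

lemma B_posdef (d : S → ℝ) (hd : ∀ s, 0 < d s) (Φ : Matrix S (Fin q) ℝ)
    (hΦ : Φ.rank = q) (B : Matrix (Fin q) (Fin q) ℝ)
    (hB : B = Φᵀ * Matrix.diagonal d * Φ) (x : Fin q → ℝ) :
    0 ≤ x ⬝ᵥ B *ᵥ x ∧ (x ⬝ᵥ B *ᵥ x = 0 → x = 0) := by
  have hBx : B *ᵥ x = Φᵀ *ᵥ (Matrix.diagonal d *ᵥ (Φ *ᵥ x)) := by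
    rw [hB, ← Matrix.mulVec_mulVec, ← Matrix.mulVec_mulVec]
  have key : x ⬝ᵥ B *ᵥ x = ∑ s, d s * (Φ *ᵥ x) s ^ 2 := by
    rw [hBx, Matrix.dotProduct_mulVec, Matrix.vecMul_transpose]
    simp [dotProduct, Matrix.mulVec_diagonal]
    exact Finset.sum_congr rfl fun s _ => by ring
  constructor
  · rw [key]
    exact Finset.sum_nonneg fun s _ => mul_nonneg (hd s).le (sq_nonneg _)
  · intro h0
    rw [key] at h0
    have hz : ∀ s ∈ Finset.univ, d s * (Φ *ᵥ x) s ^ 2 = 0 :=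
      (Finset.sum_eq_zero_iff_of_nonneg
        (fun s _ => mul_nonneg (hd s).le (sq_nonneg _))).mp h0
    have hΦx : Φ *ᵥ x = 0 := by
      funext s
      have h := (mul_eq_zero.mp (hz s (Finset.mem_univ s))).resolve_left (hd s).ne'
      simpa using pow_eq_zero_iff (n := 2) (by norm_num) |>.mp h
    exact phi_inj Φ hΦ (a₁ := x) (a₂ := 0) (by simpa using hΦx)

end Aux

/-- For the doubly regularized Lagrangian
`L(θ,λ) = (σ/2) θᵀ B θ + λᵀ Φᵀ D (R + γPΦθ − Φθ) − (1/2) λᵀ B λ` with `B = Φᵀ D Φ`,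
`A = Φᵀ D (γP − I) Φ` nonsingular, `σ ≥ 0`, and `E = B (Aᵀ)⁻¹ B`, the stationarity
system `σ B θ + Aᵀ λ = 0`, `Φᵀ D R + A θ − B λ = 0` has a unique solution whose
`θ`-component is `θ̂_σ = −(A + σE)⁻¹ Φᵀ D R` (in particular `A + σE` is invertible). -/
theorem stmt_16 {S : Type*} [Fintype S] [DecidableEq S] [Nonempty S]
    (q : ℕ) (hq : 0 < q)
    (P : Matrix S S ℝ) (γ : ℝ) (R : S → ℝ)
    (d : S → ℝ) (hd : ∀ s, 0 < d s)
    (Φ : Matrix S (Fin q) ℝ) (hΦ : Φ.rank = q)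
    (A B E : Matrix (Fin q) (Fin q) ℝ)
    (hA : A = Φᵀ * Matrix.diagonal d * (γ • P - 1) * Φ)
    (hAunit : IsUnit A)
    (hB : B = Φᵀ * Matrix.diagonal d * Φ)
    (hE : E = B * (Aᵀ)⁻¹ * B)
    (σ : ℝ) (hσ : 0 ≤ σ) :
    IsUnit (A + σ • E) ∧
    ∃ lam0 : Fin q → ℝ,
      (σ • (B *ᵥ (-((A + σ • E)⁻¹ *ᵥ ((Φᵀ * Matrix.diagonal d) *ᵥ R)))) + Aᵀ *ᵥ lam0 = 0 ∧
       (Φᵀ * Matrix.diagonal d) *ᵥ R +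
         A *ᵥ (-((A + σ • E)⁻¹ *ᵥ ((Φᵀ * Matrix.diagonal d) *ᵥ R))) - B *ᵥ lam0 = 0) ∧
      ∀ θ lam : Fin q → ℝ,
        (σ • (B *ᵥ θ) + Aᵀ *ᵥ lam = 0 ∧
         (Φᵀ * Matrix.diagonal d) *ᵥ R + A *ᵥ θ - B *ᵥ lam = 0) →
        θ = -((A + σ • E)⁻¹ *ᵥ ((Φᵀ * Matrix.diagonal d) *ᵥ R)) ∧ lam = lam0 := by
  have hAT : IsUnit Aᵀ := (Matrix.isUnit_transpose A).mpr hAunit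
  have hATdet : IsUnit Aᵀ.det := (Matrix.isUnit_iff_isUnit_det _).mp hAT
  have hATinv : Aᵀ * (Aᵀ)⁻¹ = 1 := Matrix.mul_nonsing_inv _ hATdet
  have hATinv' : (Aᵀ)⁻¹ * Aᵀ = 1 := Matrix.nonsing_inv_mul _ hATdet
  have hM : IsUnit (A + σ • E) := by
    rw [← Matrix.mulVec_injective_iff_isUnit]
    have hker : ∀ x, (A + σ • E) *ᵥ x = 0 → x = 0 := by
      intro x hx
      set y := (Aᵀ)⁻¹ *ᵥ (B *ᵥ x) with hy
      have hEx : E *ᵥ x = B *ᵥ y := by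
        rw [hE, hy, Matrix.mulVec_mulVec, Matrix.mulVec_mulVec]
      have hATy : Aᵀ *ᵥ y = B *ᵥ x := by
        rw [hy, Matrix.mulVec_mulVec, hATinv, Matrix.one_mulVec]
      have hdot : y ⬝ᵥ (A *ᵥ x) + σ * (y ⬝ᵥ B *ᵥ y) = 0 := by
        have := congrArg (fun v => y ⬝ᵥ v) hx
        simpa [Matrix.add_mulVec, Matrix.smul_mulVec, dotProduct_add,
          dotProduct_smul, hEx, smul_eq_mul] using this
      have h1 : y ⬝ᵥ (A *ᵥ x) = x ⬝ᵥ B *ᵥ x := by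
        rw [Matrix.dotProduct_mulVec, ← Matrix.mulVec_transpose, hATy]
        exact dotProduct_comm _ _
      have hBx := B_posdef d hd Φ hΦ B hB x
      have hBy := B_posdef d hd Φ hΦ B hB y
      have hxx : x ⬝ᵥ B *ᵥ x = 0 := by
        nlinarith [hBx.1, hBy.1, hdot, h1, mul_nonneg hσ hBy.1]
      exact hBx.2 hxx
    intro a b hab
    have h0 : (A + σ • E) *ᵥ (a - b) = 0 := by
      rw [Matrix.mulVec_sub, hab, sub_self]
    exact sub_eq_zero.mp (hker _ h0)
  set c : Fin q → ℝ := (Φᵀ * Matrix.diagonal d) *ᵥ R with hc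
  set θ0 : Fin q → ℝ := -((A + σ • E)⁻¹ *ᵥ c) with hθ0
  have hMdet : IsUnit (A + σ • E).det := (Matrix.isUnit_iff_isUnit_det _).mp hM
  have hMθ0 : (A + σ • E) *ᵥ θ0 = -c := by
    rw [hθ0, Matrix.mulVec_neg, Matrix.mulVec_mulVec, Matrix.mul_nonsing_inv _ hMdet,
      Matrix.one_mulVec]
  have hABθ : A *ᵥ θ0 + σ • (E *ᵥ θ0) = -c := by
    rw [← Matrix.smul_mulVec, ← Matrix.add_mulVec]; exact hMθ0
  refine ⟨hM, (-σ) • ((Aᵀ)⁻¹ *ᵥ (B *ᵥ θ0)), ⟨?_, ?_⟩, ?_⟩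
  · rw [Matrix.mulVec_smul, Matrix.mulVec_mulVec, hATinv, Matrix.one_mulVec]
    module
  · have hE0 : B *ᵥ ((Aᵀ)⁻¹ *ᵥ (B *ᵥ θ0)) = E *ᵥ θ0 := by
      rw [hE, Matrix.mulVec_mulVec, Matrix.mulVec_mulVec]
    rw [Matrix.mulVec_smul, hE0]
    have step : c + A *ᵥ θ0 - (-σ) • (E *ᵥ θ0) =
        (A *ᵥ θ0 + σ • (E *ᵥ θ0)) + c := by module
    rw [step, hABθ]
    simp
  · rintro θ lam ⟨h1, h2⟩
    have hATlam : Aᵀ *ᵥ lam = (-σ) • (B *ᵥ θ) := by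
      calc Aᵀ *ᵥ lam = (σ • (B *ᵥ θ) + Aᵀ *ᵥ lam) - σ • (B *ᵥ θ) := by module
        _ = (-σ) • (B *ᵥ θ) := by rw [h1]; module
    have hlam : lam = (-σ) • ((Aᵀ)⁻¹ *ᵥ (B *ᵥ θ)) := by
      calc lam = (Aᵀ)⁻¹ *ᵥ (Aᵀ *ᵥ lam) := by
            rw [Matrix.mulVec_mulVec, hATinv', Matrix.one_mulVec]
        _ = (-σ) • ((Aᵀ)⁻¹ *ᵥ (B *ᵥ θ)) := by rw [hATlam, Matrix.mulVec_smul]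
    have hBlam : B *ᵥ lam = (-σ) • (E *ᵥ θ) := by
      rw [hlam, Matrix.mulVec_smul, hE, Matrix.mulVec_mulVec, Matrix.mulVec_mulVec]
    have hθeq : (A + σ • E) *ᵥ θ = -c := by
      rw [Matrix.add_mulVec, Matrix.smul_mulVec]
      calc A *ᵥ θ + σ • (E *ᵥ θ)
          = (c + A *ᵥ θ - B *ᵥ lam) + (B *ᵥ lam - (-σ) • (E *ᵥ θ)) - c + σ • (E *ᵥ θ)
            + (-σ) • (E *ᵥ θ) := by module
        _ = -c := by rw [h2, hBlam]; module
    have hθ : θ = θ0 := by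
      have : (A + σ • E) *ᵥ θ = (A + σ • E) *ᵥ θ0 := by rw [hθeq, hMθ0]
      exact Matrix.mulVec_injective_iff_isUnit.mpr hM this
    exact ⟨hθ, by rw [hlam, hθ]⟩
end

section
/- Let B be a symmetric positive definite q×q real matrix and C an invertible q×q real matrix. Then the 2q×2q real block matrix M = [[−B, −Cᵀ], [C, 0]] is Hurwitz: every eigenvalue μ ∈ ℂ of M (i.e., every root of its characteristic polynomial over ℂ) has strictly negative real part. (This is the system matrix of the primal-dual gradient dynamics for the quadratically regularized saddle-point problem underlying GTD2/GTD3, with B = Φᵀ D Φ and C = Φᵀ D (γP − I) Φ.) -/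
open Matrix Polynomial Complex
open scoped ComplexOrder

lemma eig_of_isRoot {n : Type*} [Fintype n] [DecidableEq n]
    (A : Matrix n n ℂ) (μ : ℂ) (h : A.charpoly.IsRoot μ) :
    ∃ v, v ≠ 0 ∧ A *ᵥ v = μ • v := by
  have hdet : (μ • (1 : Matrix n n ℂ) - A).det = 0 := by
    have := h
    rw [Polynomial.IsRoot, Matrix.charpoly] at this
    have h2 : (Polynomial.evalRingHom μ) (charmatrix A).det = 0 := this
    rw [RingHom.map_det] at h2
    convert h2 using 2
    ext i j
    by_cases hij : i = j <;>
      simp [hij, charmatrix_apply, Matrix.one_apply, Matrix.diagonal_apply, Matrix.smul_apply]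
  obtain ⟨v, hv, hveq⟩ := (Matrix.exists_mulVec_eq_zero_iff).mpr hdet
  refine ⟨v, hv, ?_⟩
  have := hveq
  rw [Matrix.sub_mulVec, Matrix.smul_mulVec, Matrix.one_mulVec, sub_eq_zero] at this
  exact this.symm

lemma re_quad {q : ℕ} (B : Matrix (Fin q) (Fin q) ℝ) (z : Fin q → ℂ) :
    (star z ⬝ᵥ ((B.map (fun a : ℝ => (a : ℂ))) *ᵥ z)).re =
      (fun i => (z i).re) ⬝ᵥ (B *ᵥ fun i => (z i).re) +
      (fun i => (z i).im) ⬝ᵥ (B *ᵥ fun i => (z i).im) := by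
  simp only [dotProduct, Matrix.mulVec, Matrix.map_apply, Pi.star_apply,
    Finset.mul_sum, Complex.re_sum, ← Finset.sum_add_distrib]
  refine Finset.sum_congr rfl fun i _ => ?_
  refine Finset.sum_congr rfl fun j _ => ?_
  simp [Complex.mul_re, Complex.mul_im]

lemma quad_pos {q : ℕ} (B : Matrix (Fin q) (Fin q) ℝ)
    (hBpos : ∀ x : Fin q → ℝ, x ≠ 0 → 0 < x ⬝ᵥ (B *ᵥ x))
    (z : Fin q → ℂ) (hz : z ≠ 0) :
    0 < (star z ⬝ᵥ ((B.map (fun a : ℝ => (a : ℂ))) *ᵥ z)).re := by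
  rw [re_quad]
  set a : Fin q → ℝ := fun i => (z i).re with ha
  set b : Fin q → ℝ := fun i => (z i).im with hb
  have hab : a ≠ 0 ∨ b ≠ 0 := by
    by_contra h
    push_neg at h
    apply hz
    funext i
    have h1 := congrFun h.1 i
    have h2 := congrFun h.2 i
    simp only [ha, hb, Pi.zero_apply] at h1 h2
    exact Complex.ext h1 h2
  have hA : a = 0 → a ⬝ᵥ (B *ᵥ a) = 0 := by intro h; simp [h]
  have hB2 : b = 0 → b ⬝ᵥ (B *ᵥ b) = 0 := by intro h; simp [h]
  rcases hab with h | h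
  · have := hBpos a h
    by_cases hb0 : b = 0
    · rw [hB2 hb0]; linarith
    · have := hBpos b hb0; linarith
  · have := hBpos b h
    by_cases ha0 : a = 0
    · rw [hA ha0]; linarith
    · have := hBpos a ha0; linarith

lemma norm_re_nonneg {q : ℕ} (z : Fin q → ℂ) : 0 ≤ (star z ⬝ᵥ z).re := by
  have h0 : star z ⬝ᵥ z =
      star z ⬝ᵥ (((1 : Matrix (Fin q) (Fin q) ℝ).map (fun a : ℝ => (a : ℂ))) *ᵥ z) := by
    congr 1
    have h1 : ((1 : Matrix (Fin q) (Fin q) ℝ).map (fun a : ℝ => (a : ℂ))) = 1 := by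
      ext i j; by_cases h : i = j <;> simp [h, Matrix.one_apply]
    rw [h1, Matrix.one_mulVec]
  rw [h0, re_quad]
  have h1 : ∀ c : Fin q → ℝ, 0 ≤ c ⬝ᵥ ((1 : Matrix (Fin q) (Fin q) ℝ) *ᵥ c) := by
    intro c
    rw [Matrix.one_mulVec]
    exact Finset.sum_nonneg fun i _ => mul_self_nonneg _
  linarith [h1 (fun i => (z i).re), h1 (fun i => (z i).im)]

lemma norm_im_zero {q : ℕ} (z : Fin q → ℂ) : (star z ⬝ᵥ z).im = 0 := by
  have h0 : star z ⬝ᵥ z = star (star z ⬝ᵥ z) := Matrix.star_dotProduct z z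
  have h := congrArg Complex.im h0
  simp at h
  linarith

lemma norm_pos {q : ℕ} (z : Fin q → ℂ) (hz : z ≠ 0) : 0 < (star z ⬝ᵥ z).re := by
  rcases lt_or_eq_of_le (norm_re_nonneg z) with h | h
  · exact h
  · exfalso
    apply hz
    have h0 : star z ⬝ᵥ z = 0 := Complex.ext (by simp [← h]) (norm_im_zero z)
    exact (dotProduct_star_self_eq_zero).mp h0


/-- If `B` is symmetric positive definite and `C` is invertible, the block matrix
`M = [[−B, −Cᵀ], [C, 0]]` is Hurwitz: every complex eigenvalue (root of its
characteristic polynomial over `ℂ`) has strictly negative real part. -/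
theorem stmt_18 (q : ℕ) (hq : 0 < q)
    (B C : Matrix (Fin q) (Fin q) ℝ)
    (hBsymm : Bᵀ = B)
    (hBpos : ∀ x : Fin q → ℝ, x ≠ 0 → 0 < x ⬝ᵥ (B *ᵥ x))
    (hC : IsUnit C) :
    ∀ μ : ℂ,
      ((Matrix.fromBlocks (-B) (-Cᵀ) C 0).map (fun a : ℝ => (a : ℂ))).charpoly.IsRoot μ →
      μ.re < 0 := by
  intro μ hroot
  obtain ⟨v, hv, hveq⟩ := eig_of_isRoot _ μ hroot
  set f : ℝ → ℂ := fun a : ℝ => (a : ℂ) with hf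
  set B' : Matrix (Fin q) (Fin q) ℂ := B.map f with hB'
  set C' : Matrix (Fin q) (Fin q) ℂ := C.map f with hC'
  have hmap : (Matrix.fromBlocks (-B) (-Cᵀ) C 0).map f
      = Matrix.fromBlocks (-B') (-(C'ᵀ)) C' 0 := by
    ext i j
    cases i <;> cases j <;>
      simp [Matrix.fromBlocks, hf, hB', hC', Matrix.map_apply, Matrix.transpose_apply]
  set x : Fin q → ℂ := v ∘ Sum.inl with hx
  set y : Fin q → ℂ := v ∘ Sum.inr with hy
  have hvelim : v = Sum.elim x y := by
    funext i; cases i <;> rfl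
  rw [hmap, hvelim, Matrix.fromBlocks_mulVec] at hveq
  simp only [Sum.elim_comp_inl, Sum.elim_comp_inr] at hveq
  have heq1 : (-B') *ᵥ x + (-(C'ᵀ)) *ᵥ y = μ • x := funext fun i => congrFun hveq (Sum.inl i)
  have heq2 : C' *ᵥ x + (0 : Matrix (Fin q) (Fin q) ℂ) *ᵥ y = μ • y := funext fun i => congrFun hveq (Sum.inr i)
  rw [Matrix.zero_mulVec, add_zero] at heq2
  -- x ≠ 0
  have hdetC : C'.det ≠ 0 := by
    have h1 : C.det ≠ 0 := by
      intro h
      exact (by simpa [h] using (Matrix.isUnit_iff_isUnit_det C).mp hC : IsUnit (0:ℝ)).ne_zero rfl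
    rw [hC']
    have h2 : (C.map f).det = ((C.det : ℝ) : ℂ) := by
      have h3 := RingHom.map_det Complex.ofRealHom C
      rw [RingHom.mapMatrix_apply] at h3
      exact h3.symm
    rw [h2]
    simpa using h1
  have hxne : x ≠ 0 := by
    intro hx0
    have hCy : C'ᵀ *ᵥ y = 0 := by
      have := heq1
      rw [hx0] at this
      simp only [Matrix.mulVec_zero, Matrix.neg_mulVec, smul_zero, zero_add] at this
      simpa using neg_eq_zero.mp this
    have hyne : y ≠ 0 := by
      intro hy0
      apply hv
      rw [hvelim, hx0, hy0]
      funext i; cases i <;> rfl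
    have : (C'ᵀ).det = 0 := Matrix.exists_mulVec_eq_zero_iff.mp ⟨y, hyne, hCy⟩
    rw [Matrix.det_transpose] at this
    exact hdetC this
  -- quantities
  set n1 : ℂ := star x ⬝ᵥ x with hn1
  set n2 : ℂ := star y ⬝ᵥ y with hn2
  set s : ℂ := star x ⬝ᵥ (B' *ᵥ x) with hs
  set t : ℂ := star y ⬝ᵥ (C' *ᵥ x) with ht
  have h3 : -s - star x ⬝ᵥ (C'ᵀ *ᵥ y) = μ * n1 := by
    have := congrArg (fun w => star x ⬝ᵥ w) heq1
    simpa [dotProduct_add, Matrix.neg_mulVec, dotProduct_neg,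
      dotProduct_smul, smul_eq_mul, sub_eq_add_neg] using this
  have h4 : t = μ * n2 := by
    have := congrArg (fun w => star y ⬝ᵥ w) heq2
    simpa [dotProduct_smul, smul_eq_mul] using this
  have hconj : star x ⬝ᵥ (C'ᵀ *ᵥ y) = star t := by
    have hH : C'ᴴ = C'ᵀ := by
      ext i j
      simp [hC', Matrix.conjTranspose_apply, hf]
    calc star x ⬝ᵥ (C'ᵀ *ᵥ y) = (star x ᵥ* C'ᵀ) ⬝ᵥ y := Matrix.dotProduct_mulVec _ _ _
      _ = star (C' *ᵥ x) ⬝ᵥ y := by rw [Matrix.star_mulVec, hH]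
      _ = star (star y ⬝ᵥ (C' *ᵥ x)) := Matrix.star_dotProduct _ _
      _ = star t := by rw [ht]
  rw [hconj] at h3
  -- real parts
  have hin1 : n1.im = 0 := norm_im_zero x
  have hin2 : n2.im = 0 := norm_im_zero y
  have hre3 := congrArg Complex.re h3
  have hre4 := congrArg Complex.re h4
  simp only [Complex.sub_re, Complex.neg_re, Complex.mul_re, hin1, hin2,
    Complex.conj_re, Complex.conj_im] at hre3 hre4
  -- conj re: (star t).re = t.re
  rw [show (star t).re = t.re from by simp] at hre3
  rw [hre4] at hre3
  have key : μ.re * (n1.re + n2.re) = -s.re := by ring_nf; ring_nf at hre3; linarith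
  have hs_pos : 0 < s.re := quad_pos B hBpos x hxne
  have hn_pos : 0 < n1.re + n2.re := by
    have := norm_pos x hxne
    have := norm_re_nonneg y
    linarith
  nlinarith
end

section
/- Let B be a symmetric positive definite q×q real matrix, C an arbitrary q×q real matrix, and σ > 0 a real number. Then the 2q×2q real block matrix M_σ = [[−B, −Cᵀ], [C, −σB]] is Hurwitz: every eigenvalue μ ∈ ℂ of M_σ has strictly negative real part. (This is the system matrix of the primal-dual gradient dynamics of the doubly regularized Lagrangian underlying GTD4, with B = Φᵀ D Φ and C = Φᵀ D (γP − I) Φ.) -/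
open Matrix

private lemma re_bilin_aux {q : ℕ} (A : Matrix (Fin q) (Fin q) ℝ) (x y : Fin q → ℂ) :
    (star x ⬝ᵥ ((A.map (fun a : ℝ => (a : ℂ))) *ᵥ y)).re
      = (fun i => (x i).re) ⬝ᵥ (A *ᵥ fun j => (y j).re)
        + (fun i => (x i).im) ⬝ᵥ (A *ᵥ fun j => (y j).im) := by
  simp only [dotProduct, mulVec, map_apply, Pi.star_apply, Finset.mul_sum, Complex.re_sum,
    ← Finset.sum_add_distrib]
  refine Finset.sum_congr rfl fun i _ => ?_
  refine Finset.sum_congr rfl fun j _ => ?_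
  simp [Complex.mul_re, Complex.mul_im]

private lemma eigvec_of_root {n : Type*} [Fintype n] [DecidableEq n] (M : Matrix n n ℂ) (μ : ℂ)
    (h : M.charpoly.IsRoot μ) : ∃ v, v ≠ 0 ∧ M *ᵥ v = μ • v := by
  have hdet : (scalar n μ - M).det = 0 := by
    have := h
    rw [Polynomial.IsRoot, Matrix.charpoly, _root_.eval_det, matPolyEquiv_charmatrix] at this
    simpa using this
  obtain ⟨v, hv0, hv⟩ := Matrix.exists_mulVec_eq_zero_iff.mpr hdet
  refine ⟨v, hv0, ?_⟩
  rw [sub_mulVec] at hv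
  have hs : scalar n μ *ᵥ v = μ • v := by
    ext i; simp [Matrix.scalar_apply, mulVec_diagonal]
  rw [hs] at hv
  exact (sub_eq_zero.mp hv).symm

/-- If `B` is symmetric positive definite, `C` is arbitrary, and `σ > 0`, the block
matrix `M_σ = [[−B, −Cᵀ], [C, −σB]]` is Hurwitz: every complex eigenvalue (root of
its characteristic polynomial over `ℂ`) has strictly negative real part. -/
theorem stmt_19 (q : ℕ) (hq : 0 < q)
    (B C : Matrix (Fin q) (Fin q) ℝ)
    (hBsymm : Bᵀ = B)
    (hBpos : ∀ x : Fin q → ℝ, x ≠ 0 → 0 < x ⬝ᵥ (B *ᵥ x))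
    (σ : ℝ) (hσ : 0 < σ) :
    ∀ μ : ℂ,
      ((Matrix.fromBlocks (-B) (-Cᵀ) C (-σ • B)).map (fun a : ℝ => (a : ℂ))).charpoly.IsRoot μ →
      μ.re < 0 := by
  intro μ hroot
  have hBnn : ∀ z : Fin q → ℝ, 0 ≤ z ⬝ᵥ (B *ᵥ z) := by
    intro z
    rcases eq_or_ne z 0 with rfl | hz
    · simp
    · exact (hBpos z hz).le
  set Mc := (Matrix.fromBlocks (-B) (-Cᵀ) C (-σ • B)).map (fun a : ℝ => (a : ℂ)) with hMc
  obtain ⟨v, hv0, hv⟩ := eigvec_of_root Mc μ hroot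
  set x : Fin q → ℂ := v ∘ Sum.inl with hx
  set y : Fin q → ℂ := v ∘ Sum.inr with hy
  -- decompose Mc mulVec
  have hMblk : Mc = Matrix.fromBlocks ((-B).map (fun a : ℝ => (a : ℂ)))
      ((-Cᵀ).map (fun a : ℝ => (a : ℂ))) (C.map (fun a : ℝ => (a : ℂ)))
      ((-σ • B).map (fun a : ℝ => (a : ℂ))) := by
    rw [hMc, Matrix.fromBlocks_map]
  have hvelim : v = Sum.elim x y := (Sum.elim_comp_inl_inr v).symm
  -- the quadratic form identity
  have key : (star v ⬝ᵥ (Mc *ᵥ v)).re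
      = μ.re * (∑ i, Complex.normSq (v i)) := by
    rw [hv]
    have : star v ⬝ᵥ (μ • v) = μ * (star v ⬝ᵥ v) := by
      rw [dotProduct_smul]; simp [smul_eq_mul]
    rw [this]
    have hreal : star v ⬝ᵥ v = ((∑ i, Complex.normSq (v i) : ℝ) : ℂ) := by
      push_cast
      simp [dotProduct, ← Complex.normSq_eq_conj_mul_self]
    rw [hreal]
    simp [Complex.mul_re]
  -- block computation of the LHS
  set a : Fin q → ℝ := fun i => (x i).re with ha
  set b : Fin q → ℝ := fun i => (x i).im with hb
  set c : Fin q → ℝ := fun i => (y i).re with hc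
  set d : Fin q → ℝ := fun i => (y i).im with hd
  have hsplit : (star v ⬝ᵥ (Mc *ᵥ v)).re
      = (star x ⬝ᵥ (((-B).map (fun a : ℝ => (a : ℂ))) *ᵥ x)).re
        + (star x ⬝ᵥ (((-Cᵀ).map (fun a : ℝ => (a : ℂ))) *ᵥ y)).re
        + ((star y ⬝ᵥ ((C.map (fun a : ℝ => (a : ℂ))) *ᵥ x)).re
        + (star y ⬝ᵥ (((-σ • B).map (fun a : ℝ => (a : ℂ))) *ᵥ y)).re) := by
    rw [hMblk, hvelim]
    have hstar : star (Sum.elim x y) = Sum.elim (star x) (star y) := by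
      funext i; cases i <;> rfl
    rw [Matrix.fromBlocks_mulVec, hstar]
    have hxx : Sum.elim x y ∘ Sum.inl = x := rfl
    have hyy : Sum.elim x y ∘ Sum.inr = y := rfl
    rw [hxx, hyy, sumElim_dotProduct_sumElim]
    simp [dotProduct_add, Complex.add_re]
  -- cross terms cancel
  have hcross : (star x ⬝ᵥ (((-Cᵀ).map (fun a : ℝ => (a : ℂ))) *ᵥ y)).re
      + (star y ⬝ᵥ ((C.map (fun a : ℝ => (a : ℂ))) *ᵥ x)).re = 0 := by
    rw [re_bilin_aux, re_bilin_aux]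
    have h1 : ∀ (u w : Fin q → ℝ), u ⬝ᵥ ((-Cᵀ) *ᵥ w) = -(w ⬝ᵥ (C *ᵥ u)) := by
      intro u w
      rw [neg_mulVec, dotProduct_neg, dotProduct_mulVec, vecMul_transpose, dotProduct_comm]
    rw [h1, h1]
    ring
  -- diagonal terms
  have hquad1 : (star x ⬝ᵥ (((-B).map (fun a : ℝ => (a : ℂ))) *ᵥ x)).re
      = -(a ⬝ᵥ (B *ᵥ a) + b ⬝ᵥ (B *ᵥ b)) := by
    rw [re_bilin_aux]
    simp only [neg_mulVec, dotProduct_neg, ← ha, ← hb]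
    ring
  have hquad2 : (star y ⬝ᵥ (((-σ • B).map (fun a : ℝ => (a : ℂ))) *ᵥ y)).re
      = -σ * (c ⬝ᵥ (B *ᵥ c) + d ⬝ᵥ (B *ᵥ d)) := by
    rw [re_bilin_aux]
    have hsmul : (-σ • B : Matrix (Fin q) (Fin q) ℝ) = (-σ) • B := rfl
    simp only [hsmul, smul_mulVec, dotProduct_smul, smul_eq_mul, ← hc, ← hd]
    ring
  -- positivity of sum of quadratic forms
  have hQx : 0 ≤ a ⬝ᵥ (B *ᵥ a) + b ⬝ᵥ (B *ᵥ b) := add_nonneg (hBnn a) (hBnn b)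
  have hQy : 0 ≤ c ⬝ᵥ (B *ᵥ c) + d ⬝ᵥ (B *ᵥ d) := add_nonneg (hBnn c) (hBnn d)
  -- v ≠ 0 gives strict positivity somewhere
  have hpos : 0 < (a ⬝ᵥ (B *ᵥ a) + b ⬝ᵥ (B *ᵥ b)) + σ * (c ⬝ᵥ (B *ᵥ c) + d ⬝ᵥ (B *ᵥ d)) := by
    rcases eq_or_ne x 0 with hx0 | hx0
    · have hy0 : y ≠ 0 := by
        intro hy0
        apply hv0
        funext i
        cases i with
        | inl i => exact congrFun hx0 i
        | inr i => exact congrFun hy0 i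
      -- y ≠ 0 means c ≠ 0 or d ≠ 0
      have : c ≠ 0 ∨ d ≠ 0 := by
        by_contra hcd
        push_neg at hcd
        apply hy0
        funext i
        have h1 := congrFun hcd.1 i
        have h2 := congrFun hcd.2 i
        simp only [hc, hd, Pi.zero_apply] at h1 h2
        exact Complex.ext h1 h2
      have hQy' : 0 < c ⬝ᵥ (B *ᵥ c) + d ⬝ᵥ (B *ᵥ d) := by
        rcases this with h | h
        · exact lt_of_lt_of_le (hBpos c h) (le_add_of_nonneg_right (hBnn d))
        · exact lt_of_lt_of_le (hBpos d h) (le_add_of_nonneg_left (hBnn c))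
      have := mul_pos hσ hQy'
      linarith
    · have : a ≠ 0 ∨ b ≠ 0 := by
        by_contra hab
        push_neg at hab
        apply hx0
        funext i
        have h1 := congrFun hab.1 i
        have h2 := congrFun hab.2 i
        simp only [ha, hb, Pi.zero_apply] at h1 h2
        exact Complex.ext h1 h2
      have hQx' : 0 < a ⬝ᵥ (B *ᵥ a) + b ⬝ᵥ (B *ᵥ b) := by
        rcases this with h | h
        · exact lt_of_lt_of_le (hBpos a h) (le_add_of_nonneg_right (hBnn b))
        · exact lt_of_lt_of_le (hBpos b h) (le_add_of_nonneg_left (hBnn a))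
      nlinarith [mul_nonneg hσ.le hQy]
  -- sum of norms is positive
  have hS : 0 < ∑ i, Complex.normSq (v i) := by
    have hnn : ∀ i ∈ Finset.univ, (0:ℝ) ≤ Complex.normSq (v i) := fun i _ => Complex.normSq_nonneg _
    obtain ⟨i, hi⟩ : ∃ i, v i ≠ 0 := by
      by_contra hall
      push_neg at hall
      exact hv0 (funext hall)
    exact Finset.sum_pos' hnn ⟨i, Finset.mem_univ i, Complex.normSq_pos.mpr hi⟩
  -- combine
  have hfinal : μ.re * (∑ i, Complex.normSq (v i))
      = -((a ⬝ᵥ (B *ᵥ a) + b ⬝ᵥ (B *ᵥ b)) + σ * (c ⬝ᵥ (B *ᵥ c) + d ⬝ᵥ (B *ᵥ d))) := by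
    rw [← key, hsplit, hquad1, hquad2]
    linarith [hcross]
  have : μ.re * (∑ i, Complex.normSq (v i)) < 0 := by
    rw [hfinal]; linarith
  by_contra hge
  push_neg at hge
  nlinarith
end
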